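/- arXiv:0901.0091 — 7 statements merged into one kernel-verified Lean document; each statement's English description precedes it below -/
import Mathlib

section
/- Let g: ℝ → ℝ be continuously differentiable with g(0) = 0 and g'(z) ≥ ε for all z, where ε > 0. Let λ > 0, h ≥ 0, and let H: ℝ → ℝ be Lipschitz continuous with Lipschitz constant at most h. Set K = λh/ε. Let T > 0 and let c, x: [0, T] → ℝ be measurable with x(t) + c(t) ≥ 0 for almost every t ∈ [0, T], such that x, x·g(x + c) and (x∧K)·g((x∧K) + c) are integrable on [0, T]. Define y(t) = min(x(t), K), X_T = ∫₀ᵀ x(t) dt and Y_T = ∫₀ᵀ y(t) dt. Then for every p ∈ ℝ: −∫₀ᵀ y(t)·g(y(t) + c(t)) dt + H(p + λ Y_T) ≥ −∫₀ᵀ x(t)·g(x(t) + c(t)) dt + H(p + λ X_T). -/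
open MeasureTheory

/-- Pathwise truncation estimate: truncating the trading speed `x` at `K = λh/ε`
does not decrease the payoff (liquidity costs plus Lipschitz option payoff) when
the aggregate trading speed `x + c` is nonnegative a.e. -/
theorem stmt_3 (g : ℝ → ℝ) (ε : ℝ) (hε : 0 < ε) (hg : ContDiff ℝ 1 g)
    (hg0 : g 0 = 0) (hg' : ∀ z, ε ≤ deriv g z)
    (lam h : ℝ) (hlam : 0 < lam) (hh : 0 ≤ h)
    (H : ℝ → ℝ) (hH : LipschitzWith h.toNNReal H)
    (K : ℝ) (hK : K = lam * h / ε)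
    (T : ℝ) (hT : 0 < T)
    (c x : ℝ → ℝ) (hc : Measurable c) (hx : Measurable x)
    (hpos : ∀ᵐ t ∂(volume.restrict (Set.Icc (0 : ℝ) T)), 0 ≤ x t + c t)
    (hxint : IntegrableOn x (Set.Icc (0 : ℝ) T))
    (hint1 : IntegrableOn (fun t => x t * g (x t + c t)) (Set.Icc (0 : ℝ) T))
    (hint2 : IntegrableOn (fun t => min (x t) K * g (min (x t) K + c t))
      (Set.Icc (0 : ℝ) T)) :
    ∀ p : ℝ,
      -(∫ t in Set.Icc (0 : ℝ) T, min (x t) K * g (min (x t) K + c t)) +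
          H (p + lam * ∫ t in Set.Icc (0 : ℝ) T, min (x t) K)
        ≥ -(∫ t in Set.Icc (0 : ℝ) T, x t * g (x t + c t)) +
            H (p + lam * ∫ t in Set.Icc (0 : ℝ) T, x t) := by
  intro p
  have hK0 : 0 ≤ K := by rw [hK]; positivity
  have hdg : Differentiable ℝ g := hg.differentiable one_ne_zero
  -- g grows at least linearly with slope ε
  have hder : ∀ z : ℝ, HasDerivAt (fun z => g z - ε * z) (deriv g z - ε) z := by
    intro z
    exact ((hdg z).hasDerivAt).sub (by simpa using (hasDerivAt_id z).const_mul ε)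
  have hmono : Monotone (fun z => g z - ε * z) := by
    apply monotone_of_deriv_nonneg (fun z => (hder z).differentiableAt)
    intro z
    rw [(hder z).deriv]
    linarith [hg' z]
  have glin : ∀ a b : ℝ, a ≤ b → ε * (b - a) ≤ g b - g a := by
    intro a b hab
    have := hmono hab
    simp only [] at this
    linarith
  -- pointwise key estimate
  have key : ∀ u cv : ℝ, 0 ≤ u + cv →
      ε * K * (u - min u K) ≤ u * g (u + cv) - min u K * g (min u K + cv) := by
    intro u cv hpc
    rcases le_or_gt u K with hu | hu
    · simp [min_eq_left hu]
    · rw [min_eq_right hu.le]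
      have hu0 : 0 ≤ u := le_trans hK0 hu.le
      have hab : (K + cv) ≤ (u + cv) := by linarith
      have h1 : ε * ((u + cv) - (K + cv)) ≤ g (u + cv) - g (K + cv) := glin _ _ hab
      rcases le_or_gt 0 (K + cv) with hb | hb
      · have h2 : 0 ≤ g (K + cv) := by
          have := glin 0 (K + cv) hb
          rw [hg0] at this
          nlinarith
        nlinarith [mul_le_mul_of_nonneg_left h1 hu0,
          mul_nonneg (sub_nonneg.2 hu.le) h2,
          mul_nonneg (mul_nonneg hε.le (sub_nonneg.2 hu.le)) (sub_nonneg.2 hu.le)]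
      · have h2 : g (K + cv) ≤ ε * (K + cv) := by
          have := glin (K + cv) 0 hb.le
          rw [hg0] at this
          linarith
        have h3 : ε * (u + cv) ≤ g (u + cv) := by
          have := glin 0 (u + cv) hpc
          rw [hg0] at this
          linarith
        nlinarith [mul_le_mul_of_nonneg_left h3 hu0,
          mul_le_mul_of_nonneg_left h2 hK0,
          mul_nonneg (mul_nonneg hε.le (sub_nonneg.2 hu.le)) hpc]
  -- integrability of y = min x K
  have hconst : IntegrableOn (fun _ : ℝ => |K|) (Set.Icc (0 : ℝ) T) :=
    integrableOn_const measure_Icc_lt_top.ne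
  have hyint : IntegrableOn (fun t => min (x t) K) (Set.Icc (0 : ℝ) T) := by
    apply Integrable.mono' (hxint.abs.add hconst)
      ((hx.min measurable_const).aestronglyMeasurable)
    filter_upwards with t
    simp only [Pi.add_apply, Real.norm_eq_abs]
    rcases le_total (x t) K with hle | hle
    · rw [min_eq_left hle]
      have := abs_nonneg K
      linarith
    · rw [min_eq_right hle]
      have := abs_nonneg (x t)
      linarith
  set X := ∫ t in Set.Icc (0 : ℝ) T, x t with hXdef
  set Y := ∫ t in Set.Icc (0 : ℝ) T, min (x t) K with hYdef
  have hXY : Y ≤ X :=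
    integral_mono hyint hxint (fun t => min_le_left _ _)
  -- integral comparison of costs
  have hcost : lam * h * (X - Y) ≤
      (∫ t in Set.Icc (0 : ℝ) T, x t * g (x t + c t)) -
      ∫ t in Set.Icc (0 : ℝ) T, min (x t) K * g (min (x t) K + c t) := by
    have hεK : ε * K = lam * h := by
      rw [hK]; field_simp
    have hi1 : IntegrableOn (fun t => ε * K * (x t - min (x t) K)) (Set.Icc (0 : ℝ) T) :=
      (hxint.sub hyint).const_mul (ε * K)
    have hi2 : IntegrableOn
        (fun t => x t * g (x t + c t) - min (x t) K * g (min (x t) K + c t))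
        (Set.Icc (0 : ℝ) T) := hint1.sub hint2
    have hmono' : ∫ t in Set.Icc (0 : ℝ) T, ε * K * (x t - min (x t) K) ≤
        ∫ t in Set.Icc (0 : ℝ) T,
          (x t * g (x t + c t) - min (x t) K * g (min (x t) K + c t)) := by
      apply integral_mono_ae hi1 hi2
      filter_upwards [hpos] with t ht
      exact key (x t) (c t) ht
    rw [integral_const_mul, integral_sub hxint hyint] at hmono'
    rw [integral_sub hint1 hint2] at hmono'
    calc lam * h * (X - Y) = ε * K * (X - Y) := by rw [hεK]
    _ ≤ _ := hmono'
  -- Lipschitz bound on the payoff difference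
  have hLip : H (p + lam * X) - H (p + lam * Y) ≤ lam * h * (X - Y) := by
    have hd := hH.dist_le_mul (p + lam * X) (p + lam * Y)
    rw [Real.dist_eq, Real.dist_eq, Real.coe_toNNReal h hh] at hd
    have habs : |p + lam * X - (p + lam * Y)| = lam * (X - Y) := by
      rw [show p + lam * X - (p + lam * Y) = lam * (X - Y) by ring]
      exact abs_of_nonneg (mul_nonneg hlam.le (by linarith))
    rw [habs] at hd
    have := le_abs_self (H (p + lam * X) - H (p + lam * Y))
    nlinarith
  linarith
end

section
/- Let σ, λ, κ, T > 0 and α > 0 with λ² ≠ 2κσ²α, and set B := λ²/(2κ) − σ²α (so B ≠ 0). Let H: ℝ → ℝ be bounded and continuous. Define v(t, p) = (σ²/B) · log ∫_ℝ exp( (B/σ²) · H( p + σ√(T − t) z ) ) dγ(z) for (t,p) ∈ [0,T) × ℝ, where γ is the standard Gaussian measure on ℝ. Then v is of class C^{1,2} on [0,T) × ℝ, satisfies 0 = v_t + (1/2)σ² v_pp + ( λ²/(4κ) − (1/2)σ²α ) (v_p)² on [0, T) × ℝ, and v(t, p) → H(p) as t → T for every p. -/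
open MeasureTheory ProbabilityTheory
open Real
open scoped NNReal ENNReal

noncomputable def Kk (w p y : ℝ) : ℝ := (Real.sqrt (2*π*w))⁻¹ * Real.exp (-(y - p)^2 / (2*w))
noncomputable def Kk1 (w p y : ℝ) : ℝ := Kk w p y * ((y - p)/w)
noncomputable def Kk2 (w p y : ℝ) : ℝ := Kk w p y * ((y - p)^2/w^2 - 1/w)

lemma Kk_nonneg (w p y : ℝ) : 0 ≤ Kk w p y := by
  unfold Kk; positivity

lemma continuous_Kk_y (w p : ℝ) : Continuous (fun y => Kk w p y) := by
  unfold Kk; fun_prop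

lemma continuous_Kk1_y (w p : ℝ) : Continuous (fun y => Kk1 w p y) := by
  unfold Kk1 Kk; fun_prop

lemma continuous_Kk2_y (w p : ℝ) : Continuous (fun y => Kk2 w p y) := by
  unfold Kk2 Kk; fun_prop

lemma continuous_Kk2_p (w y : ℝ) : Continuous (fun p => Kk2 w p y) := by
  unfold Kk2 Kk; fun_prop

lemma hasDerivAt_Kk_p (w y p : ℝ) (hw : w ≠ 0) :
    HasDerivAt (fun p => Kk w p y) (Kk1 w p y) p := by
  have h1 : HasDerivAt (fun p : ℝ => y - p) (-1) p := (hasDerivAt_id p).const_sub y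
  have h2 : HasDerivAt (fun p : ℝ => -(y - p)^2 / (2*w))
      (-(2 * (y - p) ^ 1 * (-1)) / (2*w)) p := ((h1.pow 2).neg).div_const (2*w)
  have h3 := ((h2.exp).const_mul ((Real.sqrt (2*π*w))⁻¹))
  refine HasDerivAt.congr_deriv h3 (Eq.symm ?_)
  unfold Kk1 Kk
  field_simp

lemma hasDerivAt_Kk1_p (w y p : ℝ) (hw : w ≠ 0) :
    HasDerivAt (fun p => Kk1 w p y) (Kk2 w p y) p := by
  have h1 : HasDerivAt (fun p : ℝ => (y - p)/w) (-1/w) p :=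
    ((hasDerivAt_id p).const_sub y).div_const w
  have := (hasDerivAt_Kk_p w y p hw).mul h1
  refine HasDerivAt.congr_deriv this (Eq.symm ?_)
  unfold Kk2 Kk1
  field_simp
  ring

lemma hasDerivAt_Kk_w (p y w : ℝ) (hw : 0 < w) :
    HasDerivAt (fun w => Kk w p y) (2⁻¹ * Kk2 w p y) w := by
  have hs : Real.sqrt (2*π*w) ≠ 0 := by positivity
  have h2πw : (0:ℝ) < 2*π*w := by positivity
  -- derivative of w ↦ (sqrt (2πw))⁻¹
  have h1 : HasDerivAt (fun w : ℝ => 2*π*w) (2*π) w := by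
    simpa using (hasDerivAt_id w).const_mul (2*π)
  have h2 : HasDerivAt (fun w : ℝ => Real.sqrt (2*π*w)) (1 / (2 * Real.sqrt (2*π*w)) * (2*π)) w :=
    (Real.hasDerivAt_sqrt (ne_of_gt h2πw)).comp w h1
  have h3 : HasDerivAt (fun w : ℝ => (Real.sqrt (2*π*w))⁻¹)
      (-(1 / (2 * Real.sqrt (2*π*w)) * (2*π)) / (Real.sqrt (2*π*w))^2) w := h2.inv hs
  -- derivative of w ↦ exp (-(y-p)^2/(2w))
  have h4 : HasDerivAt (fun w : ℝ => w⁻¹) (-(w^2)⁻¹) w := hasDerivAt_inv (ne_of_gt hw)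
  have h5 : HasDerivAt (fun w : ℝ => -(y - p)^2/2 * w⁻¹) (-(y - p)^2/2 * -(w^2)⁻¹) w :=
    h4.const_mul _
  have h6 : (fun w : ℝ => -(y - p)^2/2 * w⁻¹) = fun w : ℝ => -(y - p)^2 / (2*w) := by
    funext w; field_simp
  rw [h6] at h5
  have h7 := h3.mul h5.exp
  refine HasDerivAt.congr_deriv h7 (Eq.symm ?_)
  unfold Kk2 Kk
  set s := Real.sqrt (2*π*w) with hs_def
  have hsq : s ^ 2 = 2*π*w := Real.sq_sqrt (le_of_lt h2πw)
  have hw' : w ≠ 0 := ne_of_gt hw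
  field_simp
  linear_combination (-w) * hsq

noncomputable def Db (w₂ y : ℝ) : ℝ := (1 + y^2) * Real.exp (-(1/(4*w₂)) * y^2)

lemma Db_nonneg (w₂ y : ℝ) : 0 ≤ Db w₂ y := by unfold Db; positivity

lemma integrable_Db {w₂ : ℝ} (hw₂ : 0 < w₂) : Integrable (fun y => Db w₂ y) := by
  have hb : (0:ℝ) < 1/(4*w₂) := by positivity
  have h0 : Integrable (fun y : ℝ => Real.exp (-(1/(4*w₂)) * y^2)) := integrable_exp_neg_mul_sq hb
  have h2 : Integrable (fun y : ℝ => y ^ (2:ℝ) * Real.exp (-(1/(4*w₂)) * y^2)) :=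
    integrable_rpow_mul_exp_neg_mul_sq hb (s := 2) (by norm_num)
  have h2' : Integrable (fun y : ℝ => y^2 * Real.exp (-(1/(4*w₂)) * y^2)) := by
    have heq2 : (fun y : ℝ => y ^ (2:ℝ) * Real.exp (-(1/(4*w₂)) * y^2))
        = fun y : ℝ => y^2 * Real.exp (-(1/(4*w₂)) * y^2) := by
      funext y
      rw [show ((2:ℝ) = ((2:ℕ):ℝ)) by norm_num, Real.rpow_natCast]
    rwa [heq2] at h2
  have := h0.add h2'
  have heq : (fun y : ℝ => Db w₂ y)
      = fun y => Real.exp (-(1/(4*w₂)) * y^2) + y^2 * Real.exp (-(1/(4*w₂)) * y^2) := by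
    funext y; unfold Db; ring
  rwa [heq]

noncomputable def Cb (w₁ w₂ P : ℝ) : ℝ :=
  (Real.sqrt (2*π*w₁))⁻¹ * Real.exp (P^2/(2*w₂)) * ((1+P)/w₁ + (2+2*P^2)/w₁^2 + 2/w₁ + 1)

lemma exp_key {w w₁ w₂ p P y : ℝ} (hw₁ : 0 < w₁) (h1 : w₁ ≤ w) (h2 : w ≤ w₂) (hp : |p| ≤ P) :
    Real.exp (-(y - p)^2 / (2*w)) ≤ Real.exp (P^2/(2*w₂)) * Real.exp (-(1/(4*w₂)) * y^2) := by
  rw [← Real.exp_add, Real.exp_le_exp]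
  have hw : 0 < w := lt_of_lt_of_le hw₁ h1
  have hw₂ : 0 < w₂ := lt_of_lt_of_le hw h2
  have hP : p^2 ≤ P^2 := by rw [← sq_abs p]; exact pow_le_pow_left₀ (abs_nonneg p) hp 2
  have step1 : -(y - p)^2 / (2*w) ≤ -(y - p)^2 / (2*w₂) := by
    rw [div_le_div_iff₀ (by positivity) (by positivity)]
    nlinarith [sq_nonneg (y-p)]
  have key : P^2/(2*w₂) + -(1/(4*w₂)) * y^2 - (-(y - p)^2 / (2*w₂))
      = (2*P^2 - y^2 + 2*(y-p)^2) / (4*w₂) := by field_simp; ring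
  have hnum : 0 ≤ 2*P^2 - y^2 + 2*(y-p)^2 := by nlinarith [sq_nonneg (y - 2*p)]
  have step2 : -(y - p)^2 / (2*w₂) ≤ P^2/(2*w₂) + -(1/(4*w₂)) * y^2 := by
    have : 0 ≤ (2*P^2 - y^2 + 2*(y-p)^2) / (4*w₂) := by positivity
    linarith [key ▸ this]
  linarith

section Bounds
variable {w w₁ w₂ p P y : ℝ}

lemma Kk_le_aux (hw₁ : 0 < w₁) (h1 : w₁ ≤ w) (h2 : w ≤ w₂) (hp : |p| ≤ P) :
    Kk w p y ≤ (Real.sqrt (2*π*w₁))⁻¹ * Real.exp (P^2/(2*w₂)) * Real.exp (-(1/(4*w₂)) * y^2) := by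
  have hw : 0 < w := lt_of_lt_of_le hw₁ h1
  unfold Kk
  have hpre : (Real.sqrt (2*π*w))⁻¹ ≤ (Real.sqrt (2*π*w₁))⁻¹ := by
    gcongr <;> first | positivity | nlinarith [Real.pi_pos]
  calc (Real.sqrt (2*π*w))⁻¹ * Real.exp (-(y - p)^2 / (2*w))
      ≤ (Real.sqrt (2*π*w₁))⁻¹ * (Real.exp (P^2/(2*w₂)) * Real.exp (-(1/(4*w₂)) * y^2)) :=
        mul_le_mul hpre (exp_key hw₁ h1 h2 hp) (le_of_lt (Real.exp_pos _)) (by positivity)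
    _ = _ := by ring

lemma hPnn (hp : |p| ≤ P) : 0 ≤ P := le_trans (abs_nonneg p) hp

lemma abs_Kk_le (hw₁ : 0 < w₁) (h1 : w₁ ≤ w) (h2 : w ≤ w₂) (hp : |p| ≤ P) :
    |Kk w p y| ≤ Cb w₁ w₂ P * Db w₂ y := by
  rw [abs_of_nonneg (Kk_nonneg _ _ _)]
  refine le_trans (Kk_le_aux hw₁ h1 h2 hp) ?_
  unfold Cb Db
  have hP : 0 ≤ P := hPnn hp
  have h0 : 0 ≤ (Real.sqrt (2*π*w₁))⁻¹ * Real.exp (P^2/(2*w₂)) := by positivity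
  have hE : 0 ≤ Real.exp (-(1/(4*w₂)) * y^2) := le_of_lt (Real.exp_pos _)
  nlinarith [mul_nonneg h0 hE, sq_nonneg y,
    mul_nonneg (mul_nonneg h0 hE) (sq_nonneg y),
    mul_le_mul_of_nonneg_left (mul_nonneg hE (sq_nonneg y)) h0,
    mul_nonneg (mul_nonneg h0 hE) (div_nonneg (add_nonneg one_pos.le hP) hw₁.le),
    mul_nonneg (mul_nonneg h0 hE) (div_nonneg (by positivity : (0:ℝ) ≤ 2+2*P^2) (by positivity : (0:ℝ) ≤ w₁^2)),
    mul_nonneg (mul_nonneg h0 hE) (div_nonneg (by norm_num : (0:ℝ) ≤ 2) hw₁.le)]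

lemma abs_y_le (y : ℝ) : |y| ≤ 1 + y^2 :=
  abs_le.mpr ⟨by nlinarith [sq_nonneg (y+1)], by nlinarith [sq_nonneg (y-1)]⟩

lemma abs_Kk1_le (hw₁ : 0 < w₁) (h1 : w₁ ≤ w) (h2 : w ≤ w₂) (hp : |p| ≤ P) :
    |Kk1 w p y| ≤ Cb w₁ w₂ P * Db w₂ y := by
  have hw : 0 < w := lt_of_lt_of_le hw₁ h1
  have hP : 0 ≤ P := hPnn hp
  have habs : |Kk1 w p y| = Kk w p y * |(y - p)/w| := by
    rw [Kk1, abs_mul, abs_of_nonneg (Kk_nonneg _ _ _)]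
  have hnum : |y - p| ≤ (1+P)*(1+y^2) := by
    have h3 : |y - p| ≤ |y| + P := le_trans (abs_sub _ _) (by linarith [hp])
    nlinarith [abs_y_le y, mul_nonneg hP (sq_nonneg y)]
  have hmid : |(y - p)/w| ≤ (1+P)*(1+y^2)/w₁ := by
    rw [abs_div, abs_of_pos hw]
    calc |y - p|/w ≤ ((1+P)*(1+y^2))/w := by gcongr
      _ ≤ ((1+P)*(1+y^2))/w₁ := by gcongr <;> positivity
  set a := (Real.sqrt (2*π*w₁))⁻¹ * Real.exp (P^2/(2*w₂)) with ha_def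
  have ha : 0 ≤ a := by positivity
  set E := Real.exp (-(1/(4*w₂)) * y^2) with hE_def
  have hE : 0 ≤ E := le_of_lt (Real.exp_pos _)
  have hK : Kk w p y ≤ a * E := Kk_le_aux hw₁ h1 h2 hp
  calc |Kk1 w p y| = Kk w p y * |(y - p)/w| := habs
    _ ≤ (a * E) * ((1+P)*(1+y^2)/w₁) :=
      mul_le_mul hK hmid (abs_nonneg _) (by positivity)
    _ = a * ((1+P)/w₁) * ((1+y^2) * E) := by ring
    _ ≤ a * ((1+P)/w₁ + (2+2*P^2)/w₁^2 + 2/w₁ + 1) * ((1+y^2) * E) := by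
      refine mul_le_mul_of_nonneg_right (mul_le_mul_of_nonneg_left ?_ ha) (by positivity)
      have e1 : (0:ℝ) ≤ (2+2*P^2)/w₁^2 := by positivity
      have e2 : (0:ℝ) ≤ 2/w₁ := by positivity
      linarith
    _ = Cb w₁ w₂ P * Db w₂ y := by rw [Cb, Db]

lemma abs_Kk2_le (hw₁ : 0 < w₁) (h1 : w₁ ≤ w) (h2 : w ≤ w₂) (hp : |p| ≤ P) :
    |Kk2 w p y| ≤ Cb w₁ w₂ P * Db w₂ y := by
  have hw : 0 < w := lt_of_lt_of_le hw₁ h1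
  have hP : 0 ≤ P := hPnn hp
  have hP2 : p^2 ≤ P^2 := by rw [← sq_abs p]; exact pow_le_pow_left₀ (abs_nonneg p) hp 2
  have habs : |Kk2 w p y| = Kk w p y * |(y - p)^2/w^2 - 1/w| := by
    rw [Kk2, abs_mul, abs_of_nonneg (Kk_nonneg _ _ _)]
  have hnum : (y - p)^2 ≤ (2+2*P^2)*(1+y^2) := by
    nlinarith [sq_nonneg (y+p), mul_nonneg (sq_nonneg P) (sq_nonneg y)]
  have hmid : |(y - p)^2/w^2 - 1/w| ≤ ((2+2*P^2)*(1+y^2))/w₁^2 + (1+y^2)/w₁ := by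
    have htri : |(y - p)^2/w^2 - 1/w| ≤ (y - p)^2/w^2 + 1/w := by
      refine le_trans (abs_sub _ _) ?_
      rw [abs_of_nonneg (by positivity : (0:ℝ) ≤ (y - p)^2/w^2),
        abs_of_nonneg (by positivity : (0:ℝ) ≤ 1/w)]
    refine le_trans htri ?_
    have g1 : (y - p)^2/w^2 ≤ ((2+2*P^2)*(1+y^2))/w₁^2 := by
      calc (y - p)^2/w^2 ≤ ((2+2*P^2)*(1+y^2))/w^2 := by gcongr
        _ ≤ ((2+2*P^2)*(1+y^2))/w₁^2 := by
          gcongr <;> first | positivity | nlinarith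
    have g2 : 1/w ≤ (1+y^2)/w₁ := by
      calc 1/w ≤ 1/w₁ := by gcongr
        _ ≤ (1+y^2)/w₁ := by gcongr; nlinarith [sq_nonneg y]
    linarith
  set a := (Real.sqrt (2*π*w₁))⁻¹ * Real.exp (P^2/(2*w₂)) with ha_def
  have ha : 0 ≤ a := by positivity
  set E := Real.exp (-(1/(4*w₂)) * y^2) with hE_def
  have hE : 0 ≤ E := le_of_lt (Real.exp_pos _)
  have hK : Kk w p y ≤ a * E := Kk_le_aux hw₁ h1 h2 hp
  calc |Kk2 w p y| = Kk w p y * |(y - p)^2/w^2 - 1/w| := habs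
    _ ≤ (a * E) * (((2+2*P^2)*(1+y^2))/w₁^2 + (1+y^2)/w₁) :=
      mul_le_mul hK hmid (abs_nonneg _) (by positivity)
    _ = a * ((2+2*P^2)/w₁^2 + 1/w₁) * ((1+y^2) * E) := by ring
    _ ≤ a * ((1+P)/w₁ + (2+2*P^2)/w₁^2 + 2/w₁ + 1) * ((1+y^2) * E) := by
      refine mul_le_mul_of_nonneg_right (mul_le_mul_of_nonneg_left ?_ ha) (by positivity)
      have e1 : (0:ℝ) ≤ (1+P)/w₁ := by positivity
      have e3 : (1:ℝ)/w₁ ≤ 2/w₁ := by gcongr <;> norm_num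
      linarith
    _ = Cb w₁ w₂ P * Db w₂ y := by rw [Cb, Db]

end Bounds

lemma Cb_nonneg {w₁ w₂ P : ℝ} (hw₁ : 0 < w₁) (hP : 0 ≤ P) : 0 ≤ Cb w₁ w₂ P := by
  unfold Cb; positivity

section QQ
variable {G : ℝ → ℝ} {M : ℝ}

noncomputable def Q0 (G : ℝ → ℝ) (w p : ℝ) : ℝ := ∫ y, G y * Kk w p y
noncomputable def Qd1 (G : ℝ → ℝ) (w p : ℝ) : ℝ := ∫ y, G y * Kk1 w p y
noncomputable def Qd2 (G : ℝ → ℝ) (w p : ℝ) : ℝ := ∫ y, G y * Kk2 w p y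

lemma M_nonneg (hM : ∀ y, |G y| ≤ M) : 0 ≤ M := le_trans (abs_nonneg _) (hM 0)

lemma integral_gauss_eq (hGc : Continuous G) {s : ℝ} (hs : s ≠ 0) (p : ℝ) :
    ∫ z, G (p + s*z) ∂(gaussianReal 0 1) = Q0 G (s^2) p := by
  set v : ℝ≥0 := ⟨s^2, sq_nonneg s⟩ with hv_def
  have hv : v ≠ 0 := by
    intro h
    apply pow_ne_zero 2 hs
    have := congrArg (fun x : ℝ≥0 => (x:ℝ)) h
    simp only [hv_def, NNReal.coe_zero] at this
    exact this
  have hmap : (gaussianReal 0 1).map (fun z => s*z + p) = gaussianReal p v := by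
    have hcomp : (fun z : ℝ => s*z + p) = (· + p) ∘ (fun z => s * z) := rfl
    rw [hcomp, ← Measure.map_map (measurable_add_const p) (measurable_const_mul s)]
    have h1 : (gaussianReal 0 1).map (fun z => s * z) = gaussianReal (s*0) (⟨s^2, sq_nonneg s⟩*1) := by
      exact gaussianReal_map_const_mul (μ := 0) (v := 1) s
    rw [h1, gaussianReal_map_add_const p]
    norm_num [hv_def]
    exact congrArg (gaussianReal p) (mul_one _)
  have h1 : ∫ z, G (p + s*z) ∂(gaussianReal 0 1)
      = ∫ y, G y ∂((gaussianReal 0 1).map (fun z => s*z + p)) := by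
    rw [integral_map (by fun_prop) hGc.aestronglyMeasurable]
    congr 1 with z
    rw [add_comm]
  rw [h1, hmap, gaussianReal_of_var_ne_zero p hv, gaussianPDF_def]
  have h2 : (fun x => ENNReal.ofReal (gaussianPDFReal p v x))
      = fun x => ((Real.toNNReal (gaussianPDFReal p v x) : ℝ≥0) : ℝ≥0∞) := rfl
  rw [h2, integral_withDensity_eq_integral_smul
    ((measurable_gaussianPDFReal p v).real_toNNReal) G]
  rw [Q0]
  congr 1 with y
  rw [NNReal.smul_def, smul_eq_mul, Real.coe_toNNReal _ (gaussianPDFReal_nonneg p v y), mul_comm]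
  simp only [gaussianPDFReal, Kk, hv_def, NNReal.coe_mk]
  rfl

lemma integrable_G_mul (hGc : Continuous G) (hM : ∀ y, |G y| ≤ M) {F : ℝ → ℝ} {C w₂ : ℝ}
    (hw₂ : 0 < w₂) (hFc : Continuous F) (hF : ∀ y, |F y| ≤ C * Db w₂ y) :
    Integrable (fun y => G y * F y) := by
  refine Integrable.mono' (((integrable_Db hw₂).const_mul (M*C))) ((hGc.mul hFc).aestronglyMeasurable)
    (Filter.Eventually.of_forall fun y => ?_)
  rw [Real.norm_eq_abs, abs_mul]
  calc |G y| * |F y| ≤ M * (C * Db w₂ y) :=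
    mul_le_mul (hM y) (hF y) (abs_nonneg _) (M_nonneg hM)
    _ = M * C * Db w₂ y := by ring

lemma hasDerivAt_Q0_p (hGc : Continuous G) (hM : ∀ y, |G y| ≤ M) {w : ℝ} (hw : 0 < w) (p : ℝ) :
    HasDerivAt (fun q => Q0 G w q) (Qd1 G w p) p := by
  have key := hasDerivAt_integral_of_dominated_loc_of_deriv_le (μ := volume)
    (F := fun x a => G a * Kk w x a) (F' := fun x a => G a * Kk1 w x a)
    (bound := fun a => M * Cb w w (|p|+1) * Db w a) (s := Metric.ball p 1) (x₀ := p) (Metric.ball_mem_nhds p one_pos)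
    (Filter.Eventually.of_forall fun x => ((hGc.mul (continuous_Kk_y w x)).aestronglyMeasurable))
    (integrable_G_mul hGc hM hw (continuous_Kk_y w p)
      (fun y => abs_Kk_le hw le_rfl le_rfl (by linarith [abs_nonneg p] : |p| ≤ |p|+1)))
    ((hGc.mul (continuous_Kk1_y w p)).aestronglyMeasurable)
    (Filter.Eventually.of_forall fun a => fun x hx => by
      rw [Real.norm_eq_abs, abs_mul]
      have hxP : |x| ≤ |p| + 1 := by
        have := mem_ball_iff_norm.mp hx
        calc |x| ≤ |x - p| + |p| := by simpa using abs_add_le (x - p) p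
          _ ≤ |p| + 1 := by rw [Real.norm_eq_abs] at this; linarith
      calc |G a| * |Kk1 w x a| ≤ M * (Cb w w (|p|+1) * Db w a) :=
        mul_le_mul (hM a) (abs_Kk1_le hw le_rfl le_rfl hxP) (abs_nonneg _) (M_nonneg hM)
        _ = M * Cb w w (|p|+1) * Db w a := by ring)
    ((integrable_Db hw).const_mul _)
    (Filter.Eventually.of_forall fun a => fun x _ =>
      (hasDerivAt_Kk_p w a x (ne_of_gt hw)).const_mul (G a))
  exact key.2

lemma hasDerivAt_Q1_p (hGc : Continuous G) (hM : ∀ y, |G y| ≤ M) {w : ℝ} (hw : 0 < w) (p : ℝ) :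
    HasDerivAt (fun q => Qd1 G w q) (Qd2 G w p) p := by
  have key := hasDerivAt_integral_of_dominated_loc_of_deriv_le (μ := volume)
    (F := fun x a => G a * Kk1 w x a) (F' := fun x a => G a * Kk2 w x a)
    (bound := fun a => M * Cb w w (|p|+1) * Db w a) (s := Metric.ball p 1) (x₀ := p) (Metric.ball_mem_nhds p one_pos)
    (Filter.Eventually.of_forall fun x => ((hGc.mul (continuous_Kk1_y w x)).aestronglyMeasurable))
    (integrable_G_mul hGc hM hw (continuous_Kk1_y w p)
      (fun y => abs_Kk1_le hw le_rfl le_rfl (by linarith [abs_nonneg p] : |p| ≤ |p|+1)))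
    ((hGc.mul (continuous_Kk2_y w p)).aestronglyMeasurable)
    (Filter.Eventually.of_forall fun a => fun x hx => by
      rw [Real.norm_eq_abs, abs_mul]
      have hxP : |x| ≤ |p| + 1 := by
        have := mem_ball_iff_norm.mp hx
        calc |x| ≤ |x - p| + |p| := by simpa using abs_add_le (x - p) p
          _ ≤ |p| + 1 := by rw [Real.norm_eq_abs] at this; linarith
      calc |G a| * |Kk2 w x a| ≤ M * (Cb w w (|p|+1) * Db w a) :=
        mul_le_mul (hM a) (abs_Kk2_le hw le_rfl le_rfl hxP) (abs_nonneg _) (M_nonneg hM)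
        _ = M * Cb w w (|p|+1) * Db w a := by ring)
    ((integrable_Db hw).const_mul _)
    (Filter.Eventually.of_forall fun a => fun x _ =>
      (hasDerivAt_Kk1_p w a x (ne_of_gt hw)).const_mul (G a))
  exact key.2

lemma hasDerivAt_Q0_w (hGc : Continuous G) (hM : ∀ y, |G y| ≤ M) {w : ℝ} (hw : 0 < w) (p : ℝ) :
    HasDerivAt (fun u => Q0 G u p) (2⁻¹ * Qd2 G w p) w := by
  have hw2 : 0 < w/2 := by linarith
  have key := hasDerivAt_integral_of_dominated_loc_of_deriv_le (μ := volume)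
    (F := fun x a => G a * Kk x p a) (F' := fun x a => G a * (2⁻¹ * Kk2 x p a))
    (bound := fun a => M * Cb (w/2) (2*w) (|p|) * Db (2*w) a) (s := Metric.ball w (w/2)) (x₀ := w) (Metric.ball_mem_nhds w hw2)
    (Filter.Eventually.of_forall fun x => ((hGc.mul (continuous_Kk_y x p)).aestronglyMeasurable))
    (integrable_G_mul hGc hM (by linarith : (0:ℝ) < 2*w) (continuous_Kk_y w p)
      (fun y => abs_Kk_le hw2 (by linarith) (by linarith) le_rfl))
    ((hGc.mul (continuous_const.mul (continuous_Kk2_y w p))).aestronglyMeasurable)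
    (Filter.Eventually.of_forall fun a => fun x hx => by
      rw [Real.norm_eq_abs, abs_mul]
      have hxw : w/2 ≤ x ∧ x ≤ 2*w := by
        have h0 := mem_ball_iff_norm.mp hx
        rw [Real.norm_eq_abs] at h0
        have h' := abs_le.mp h0.le
        exact ⟨by linarith [h'.1], by linarith [h'.2]⟩
      have h2 : |2⁻¹ * Kk2 x p a| ≤ |Kk2 x p a| := by
        rw [abs_mul, abs_inv, abs_two]
        linarith [abs_nonneg (Kk2 x p a)]
      calc |G a| * |2⁻¹ * Kk2 x p a| ≤ M * (Cb (w/2) (2*w) (|p|) * Db (2*w) a) :=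
        mul_le_mul (hM a) (le_trans h2 (abs_Kk2_le hw2 hxw.1 hxw.2 le_rfl)) (abs_nonneg _) (M_nonneg hM)
        _ = M * Cb (w/2) (2*w) (|p|) * Db (2*w) a := by ring)
    ((integrable_Db (by linarith : (0:ℝ) < 2*w)).const_mul _)
    (Filter.Eventually.of_forall fun a => fun x hx => by
      have hx0 : 0 < x := by
        have := mem_ball_iff_norm.mp hx
        rw [Real.norm_eq_abs] at this
        linarith [(abs_le.mp this.le).1]
      exact (hasDerivAt_Kk_w p a x hx0).const_mul (G a))
  have h3 : (∫ a, G a * (2⁻¹ * Kk2 w p a)) = 2⁻¹ * Qd2 G w p := by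
    rw [Qd2, ← integral_const_mul]
    congr 1 with a
    ring
  exact h3 ▸ key.2

lemma continuous_Qd2_p (hGc : Continuous G) (hM : ∀ y, |G y| ≤ M) {w : ℝ} (hw : 0 < w) :
    Continuous (fun p => Qd2 G w p) := by
  rw [continuous_iff_continuousAt]
  intro p
  refine continuousAt_of_dominated
    (Filter.Eventually.of_forall fun x => ((hGc.mul (continuous_Kk2_y w x)).aestronglyMeasurable))
    ?_ ((integrable_Db hw).const_mul (M * Cb w w (|p|+1))) ?_
  · filter_upwards [Metric.ball_mem_nhds p one_pos] with x hx
    refine Filter.Eventually.of_forall fun a => ?_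
    rw [Real.norm_eq_abs, abs_mul]
    have hxP : |x| ≤ |p| + 1 := by
      have := mem_ball_iff_norm.mp hx
      calc |x| ≤ |x - p| + |p| := by simpa using abs_add_le (x - p) p
        _ ≤ |p| + 1 := by rw [Real.norm_eq_abs] at this; linarith
    calc |G a| * |Kk2 w x a| ≤ M * (Cb w w (|p|+1) * Db w a) :=
      mul_le_mul (hM a) (abs_Kk2_le hw le_rfl le_rfl hxP) (abs_nonneg _) (M_nonneg hM)
      _ = M * Cb w w (|p|+1) * Db w a := by ring
  · exact Filter.Eventually.of_forall fun a =>
      (continuous_const.mul (continuous_Kk2_p w a)).continuousAt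

lemma gauss_integrable (hGc : Continuous G) (hM : ∀ y, |G y| ≤ M) (s p : ℝ) :
    Integrable (fun z => G (p + s*z)) (gaussianReal 0 1) := by
  refine Integrable.mono' (integrable_const M)
    ((hGc.comp (by fun_prop)).aestronglyMeasurable)
    (Filter.Eventually.of_forall fun z => ?_)
  exact hM _

lemma gauss_int_ge (hGc : Continuous G) (hM : ∀ y, |G y| ≤ M) {m : ℝ}
    (hGm : ∀ y, m ≤ G y) (s p : ℝ) :
    m ≤ ∫ z, G (p + s*z) ∂(gaussianReal 0 1) := by
  have h1 : ∫ (_ : ℝ), m ∂(gaussianReal 0 1) = m := by simp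
  rw [← h1]
  exact integral_mono (integrable_const m) (gauss_integrable hGc hM s p) fun z => hGm _

end QQ

/-- Closed-form solution for the single CARA player with linear costs: with
`B = λ²/(2κ) − σ²α ≠ 0`, the Cole–Hopf formula
`v(t,p) = (σ²/B) log ∫ exp((B/σ²) H(p + σ√(T−t) z)) dγ(z)` defines a `C^{1,2}`
solution of `0 = v_t + ½σ²v_pp + (λ²/(4κ) − ½σ²α) v_p²` on `[0,T) × ℝ` with
terminal value `H`. -/
theorem stmt_13 (σ lam κ T α : ℝ) (hσ : 0 < σ) (hlam : 0 < lam) (hκ : 0 < κ)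
    (hT : 0 < T) (hα : 0 < α) (hne : lam ^ 2 ≠ 2 * κ * σ ^ 2 * α)
    (B : ℝ) (hB : B = lam ^ 2 / (2 * κ) - σ ^ 2 * α)
    (H : ℝ → ℝ) (hHb : ∃ M, ∀ p, |H p| ≤ M) (hHc : Continuous H)
    (v : ℝ → ℝ → ℝ)
    (hv : ∀ t p, v t p = (σ ^ 2 / B) * Real.log
      (∫ z, Real.exp ((B / σ ^ 2) * H (p + σ * Real.sqrt (T - t) * z))
        ∂(gaussianReal 0 1))) :
    (∀ p : ℝ, ∀ t ∈ Set.Ico (0 : ℝ) T,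
      DifferentiableAt ℝ (fun s => v s p) t) ∧
    (∀ t ∈ Set.Ico (0 : ℝ) T, ContDiff ℝ 2 (fun p => v t p)) ∧
    (∀ t ∈ Set.Ico (0 : ℝ) T, ∀ p : ℝ,
      0 = deriv (fun s => v s p) t
        + (1 / 2) * σ ^ 2 * deriv (deriv (fun q => v t q)) p
        + (lam ^ 2 / (4 * κ) - (1 / 2) * σ ^ 2 * α)
          * (deriv (fun q => v t q) p) ^ 2) ∧
    (∀ p : ℝ, Filter.Tendsto (fun t => v t p)
      (nhdsWithin T (Set.Iio T)) (nhds (H p))) := by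
  obtain ⟨M₀, hM₀⟩ := hHb
  have hσ2 : (0:ℝ) < σ^2 := by positivity
  have hκ' : (2:ℝ)*κ ≠ 0 := by positivity
  have hBne : B ≠ 0 := by
    rw [hB]
    intro h
    apply hne
    field_simp at h
    linarith
  set c : ℝ := B / σ^2 with hc_def
  set G : ℝ → ℝ := fun y => Real.exp (c * H y) with hG_def
  have hGc : Continuous G := Real.continuous_exp.comp (continuous_const.mul hHc)
  set M : ℝ := Real.exp (|c| * M₀) with hM_def
  set m : ℝ := Real.exp (-(|c| * M₀)) with hm_def
  have habs : ∀ y, |c * H y| ≤ |c| * M₀ := fun y => by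
    rw [abs_mul]
    exact mul_le_mul_of_nonneg_left (hM₀ y) (abs_nonneg c)
  have hM : ∀ y, |G y| ≤ M := fun y => by
    rw [hG_def, abs_of_nonneg (le_of_lt (Real.exp_pos _))]
    exact Real.exp_le_exp.mpr (le_trans (le_abs_self _) (habs y))
  have hGm : ∀ y, m ≤ G y := fun y => by
    rw [hG_def, hm_def]
    exact Real.exp_le_exp.mpr (le_trans (neg_le_neg (habs y)) (neg_abs_le _))
  have hm : 0 < m := Real.exp_pos _
  -- the basic identity
  have hveq : ∀ t, t < T → ∀ p, v t p = (σ^2/B) * Real.log (Q0 G (σ^2*(T-t)) p) := by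
    intro t ht p
    have htT : 0 < T - t := by linarith
    have hs : σ * Real.sqrt (T-t) ≠ 0 :=
      ne_of_gt (mul_pos hσ (Real.sqrt_pos.mpr htT))
    have hsq : (σ * Real.sqrt (T-t))^2 = σ^2*(T-t) := by
      rw [mul_pow, Real.sq_sqrt (le_of_lt htT)]
    have hI : (∫ z, Real.exp ((B / σ ^ 2) * H (p + σ * Real.sqrt (T - t) * z))
        ∂(gaussianReal 0 1)) = Q0 G (σ^2*(T-t)) p := by
      rw [← hsq, ← integral_gauss_eq hGc hs p]
    rw [hv t p, hI]
  -- positivity of Q0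
  have hQpos : ∀ t, t < T → ∀ q, 0 < Q0 G (σ^2*(T-t)) q := by
    intro t ht q
    have htT : 0 < T - t := by linarith
    have hs : σ * Real.sqrt (T-t) ≠ 0 :=
      ne_of_gt (mul_pos hσ (Real.sqrt_pos.mpr htT))
    have hsq : (σ * Real.sqrt (T-t))^2 = σ^2*(T-t) := by
      rw [mul_pow, Real.sq_sqrt (le_of_lt htT)]
    have h1 := gauss_int_ge hGc hM hGm (σ * Real.sqrt (T-t)) q
    rw [integral_gauss_eq hGc hs q, hsq] at h1
    exact lt_of_lt_of_le hm h1
  -- t-derivative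
  have hvt : ∀ p, ∀ t, t < T →
      HasDerivAt (fun s => v s p)
        ((σ^2/B) * ((2⁻¹ * Qd2 G (σ^2*(T-t)) p * -σ^2) / Q0 G (σ^2*(T-t)) p)) t := by
    intro p t ht
    have hw : 0 < σ^2*(T-t) := mul_pos hσ2 (by linarith)
    have hA : HasDerivAt (fun s : ℝ => σ^2*(T - s)) (-σ^2) t := by
      simpa using ((hasDerivAt_id t).const_sub T).const_mul (σ^2)
    have hQw := (hasDerivAt_Q0_w hGc hM hw p).comp t hA
    have hlog := (hQw.log (ne_of_gt (hQpos t ht p))).const_mul (σ^2/B)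
    have hEv : (fun s => v s p)
        =ᶠ[nhds t] (fun s => (σ^2/B) * Real.log ((fun u => Q0 G u p) ((fun s : ℝ => σ^2*(T - s)) s))) := by
      filter_upwards [Iio_mem_nhds ht] with s hs using hveq s hs p
    have h2 := hlog.congr_of_eventuallyEq hEv
    refine h2.congr_deriv ?_
    try ring
    rfl
  -- p-derivative (first order)
  have hvp : ∀ t, t < T → ∀ q,
      HasDerivAt (fun q => v t q)
        ((σ^2/B) * (Qd1 G (σ^2*(T-t)) q / Q0 G (σ^2*(T-t)) q)) q := by
    intro t ht q
    have hw : 0 < σ^2*(T-t) := mul_pos hσ2 (by linarith)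
    have hfun : (fun q => v t q) = fun q => (σ^2/B) * Real.log (Q0 G (σ^2*(T-t)) q) :=
      funext fun q => hveq t ht q
    rw [hfun]
    exact ((hasDerivAt_Q0_p hGc hM hw q).log (ne_of_gt (hQpos t ht q))).const_mul (σ^2/B)
  have hderiv1 : ∀ t, t < T → deriv (fun q => v t q)
      = fun q => (σ^2/B) * (Qd1 G (σ^2*(T-t)) q / Q0 G (σ^2*(T-t)) q) :=
    fun t ht => funext fun q => (hvp t ht q).deriv
  refine ⟨?_, ?_, ?_, ?_⟩
  · exact fun p t ht => (hvt p t ht.2).differentiableAt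
  · -- C² in p
    intro t ht
    have hw : 0 < σ^2*(T-t) := mul_pos hσ2 (by linarith [ht.2])
    have hfun : (fun q => v t q) = fun q => (σ^2/B) * Real.log (Q0 G (σ^2*(T-t)) q) :=
      funext fun q => hveq t ht.2 q
    rw [hfun]
    have hd : deriv (fun q => Q0 G (σ^2*(T-t)) q) = fun q => Qd1 G (σ^2*(T-t)) q :=
      funext fun q => (hasDerivAt_Q0_p hGc hM hw q).deriv
    have hd1 : deriv (fun q => Qd1 G (σ^2*(T-t)) q) = fun q => Qd2 G (σ^2*(T-t)) q :=
      funext fun q => (hasDerivAt_Q1_p hGc hM hw q).deriv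
    have hQ2 : ContDiff ℝ (1+1) (fun q => Q0 G (σ^2*(T-t)) q) := by
      rw [contDiff_succ_iff_deriv]
      refine ⟨fun q => (hasDerivAt_Q0_p hGc hM hw q).differentiableAt, by simp, ?_⟩
      rw [hd, contDiff_one_iff_deriv]
      exact ⟨fun q => (hasDerivAt_Q1_p hGc hM hw q).differentiableAt,
        by rw [hd1]; exact continuous_Qd2_p hGc hM hw⟩
    have hQ2' : ContDiff ℝ 2 (fun q => Q0 G (σ^2*(T-t)) q) := by
      convert hQ2 using 2
      try norm_num
    exact contDiff_const.mul (hQ2'.log fun q => ne_of_gt (hQpos t ht.2 q))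
  · -- the PDE
    intro t ht p
    have ht2 := ht.2
    have hw : 0 < σ^2*(T-t) := mul_pos hσ2 (by linarith)
    have hQp := hQpos t ht2 p
    have hdt := (hvt p t ht2).deriv
    have hdp := (hvp t ht2 p).deriv
    have hvpp : HasDerivAt (fun q => (σ^2/B) * (Qd1 G (σ^2*(T-t)) q / Q0 G (σ^2*(T-t)) q))
        ((σ^2/B) * ((Qd2 G (σ^2*(T-t)) p * Q0 G (σ^2*(T-t)) p
          - Qd1 G (σ^2*(T-t)) p * Qd1 G (σ^2*(T-t)) p) / (Q0 G (σ^2*(T-t)) p)^2)) p :=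
      (((hasDerivAt_Q1_p hGc hM hw p).div (hasDerivAt_Q0_p hGc hM hw p)
        (ne_of_gt hQp))).const_mul (σ^2/B)
    have hdpp : deriv (deriv (fun q => v t q)) p
        = (σ^2/B) * ((Qd2 G (σ^2*(T-t)) p * Q0 G (σ^2*(T-t)) p
          - Qd1 G (σ^2*(T-t)) p * Qd1 G (σ^2*(T-t)) p) / (Q0 G (σ^2*(T-t)) p)^2) := by
      rw [hderiv1 t ht2]
      exact hvpp.deriv
    rw [hdt, hdp, hdpp]
    have hcoef : lam ^ 2 / (4 * κ) - 1 / 2 * σ ^ 2 * α = B/2 := by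
      rw [hB]; field_simp; ring
    rw [hcoef]
    field_simp
    ring
  · -- terminal condition
    intro p
    set l := nhdsWithin T (Set.Iio T) with hl_def
    have hs0 : Filter.Tendsto (fun t : ℝ => σ * Real.sqrt (T - t)) l (nhds 0) := by
      have hcont : Continuous (fun t : ℝ => σ * Real.sqrt (T - t)) :=
        continuous_const.mul (Real.continuous_sqrt.comp (continuous_const.sub continuous_id))
      have hle : l ≤ nhds T := nhdsWithin_le_nhds
      have := (hcont.tendsto T).mono_left hle
      simpa using this
    have hI : Filter.Tendsto
        (fun t => ∫ z, Real.exp ((B / σ ^ 2) * H (p + σ * Real.sqrt (T - t) * z))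
          ∂(gaussianReal 0 1)) l (nhds (G p)) := by
      have hval : G p = ∫ (_ : ℝ), G p ∂(gaussianReal 0 1) := by simp
      rw [hval]
      refine tendsto_integral_filter_of_dominated_convergence (fun _ => M)
        (Filter.Eventually.of_forall fun t =>
          (hGc.comp (by fun_prop : Continuous fun z : ℝ =>
            p + σ * Real.sqrt (T - t) * z)).aestronglyMeasurable)
        (Filter.Eventually.of_forall fun t =>
          Filter.Eventually.of_forall fun z => by
            simpa [hG_def, hc_def, Real.norm_eq_abs, mul_assoc] using hM (p + σ * Real.sqrt (T - t) * z))
        (integrable_const M)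
        (Filter.Eventually.of_forall fun z => ?_)
      have hin : Filter.Tendsto (fun t => p + σ * Real.sqrt (T - t) * z) l (nhds p) := by
        have h3 := (tendsto_const_nhds : Filter.Tendsto (fun _ : ℝ => p) l (nhds p)).add (hs0.mul_const z)
        simpa using h3
      have := (hGc.tendsto p).comp hin
      simpa [hG_def, hc_def, mul_assoc, Function.comp_def] using this
    have hGp : (0:ℝ) < G p := Real.exp_pos _
    have hlog := ((Real.continuousAt_log (ne_of_gt hGp)).tendsto.comp hI).const_mul (σ^2/B)
    have hfeq : (fun t => v t p)
        = fun t => (σ^2/B) * Real.log (∫ z, Real.exp ((B / σ ^ 2) * H (p + σ * Real.sqrt (T - t) * z))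
          ∂(gaussianReal 0 1)) := funext fun t => hv t p
    rw [hfeq]
    have hfin : (σ^2/B) * Real.log (G p) = H p := by
      rw [hG_def]
      simp only [Real.log_exp, hc_def]
      field_simp
    rw [← hfin]
    exact hlog
end

section
/- Let σ > 0, c ∈ ℝ, T > 0 and let v: [0, T] × ℝ → ℝ be a bounded C^{1,2} function with bounded p-derivative satisfying 0 = v_t + (1/2)σ² v_pp + c (v_p)² on [0, T) × ℝ and v(T, p) = 0 for all p. Then v ≡ 0 on [0, T] × ℝ. Consequently, in a zero-sum N-player risk-neutral market game with linear cost g(z) = κz, where the aggregate value function solves this equation with c = λ²N/(κ(N+1)²) and terminal condition Σᵢ Hⁱ = 0, the aggregate equilibrium trading speed (λ/(κ(N+1))) v_p vanishes identically. -/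
set_option maxHeartbeats 1000000

open Set Filter Real Topology

lemma aux_deriv_nonpos_right {f : ℝ → ℝ} {a b : ℝ} (hab : a < b)
    (hd : DifferentiableAt ℝ f a) (hmax : ∀ s ∈ Set.Icc a b, f s ≤ f a) :
    deriv f a ≤ 0 := by
  have h := hasDerivAt_iff_tendsto_slope.1 hd.hasDerivAt
  have h' : Tendsto (slope f a) (𝓝[>] a) (𝓝 (deriv f a)) :=
    h.mono_left (nhdsWithin_mono a fun x hx => Set.mem_compl_singleton_iff.mpr (Set.mem_Ioi.mp hx).ne')
  refine le_of_tendsto h' ?_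
  filter_upwards [Ioc_mem_nhdsGT_of_mem ⟨le_refl a, hab⟩] with s hs
  rw [slope_def_field]
  exact div_nonpos_of_nonpos_of_nonneg (sub_nonpos.2 (hmax s ⟨hs.1.le, hs.2⟩))
    (sub_nonneg.2 hs.1.le)

lemma aux_second_deriv_nonpos {f : ℝ → ℝ} {p : ℝ} (hf : ContDiff ℝ 2 f)
    (hmax : IsLocalMax f p) : deriv (deriv f) p ≤ 0 := by
  by_contra hpos
  push_neg at hpos
  have hf2 : ContDiff ℝ (1 + 1 : WithTop ℕ∞) f := by
    rw [show (1 + 1 : WithTop ℕ∞) = 2 by norm_num]; exact hf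
  have hg : ContDiff ℝ 1 (deriv f) := (contDiff_succ_iff_deriv.mp hf2).2.2
  have hgd : DifferentiableAt ℝ (deriv f) p :=
    (hg.differentiable one_ne_zero).differentiableAt
  have hgp : deriv f p = 0 := hmax.deriv_eq_zero
  have hslope := hasDerivAt_iff_tendsto_slope.1 hgd.hasDerivAt
  have hslope' : Tendsto (slope (deriv f) p) (𝓝[>] p) (𝓝 (deriv (deriv f) p)) :=
    hslope.mono_left (nhdsWithin_mono p fun x hx => Set.mem_compl_singleton_iff.mpr (Set.mem_Ioi.mp hx).ne')
  have hev : ∀ᶠ s in 𝓝[>] p, 0 < slope (deriv f) p s :=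
    hslope'.eventually (lt_mem_nhds hpos)
  have hev2 : ∀ᶠ s in 𝓝[>] p, f s ≤ f p := hmax.filter_mono nhdsWithin_le_nhds
  have hev3 := hev.and hev2
  rw [Filter.eventually_iff, mem_nhdsGT_iff_exists_Ioo_subset] at hev3
  obtain ⟨u, hu, hsub⟩ := hev3
  have hpu : p < u := hu
  set b := (p + u) / 2 with hb
  have hpb : p < b := by simp only [hb]; linarith
  have hbu : b < u := by simp only [hb]; linarith
  have hbmem := hsub ⟨hpb, hbu⟩
  obtain ⟨ξ, hξ, hξeq⟩ := exists_hasDerivAt_eq_slope f (deriv f) hpb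
    ((hf.continuous).continuousOn)
    (fun x _ => ((hf.differentiable (by norm_num)).differentiableAt).hasDerivAt)
  have hξmem := hsub ⟨hξ.1, lt_trans hξ.2 hbu⟩
  have h1 : 0 < slope (deriv f) p ξ := hξmem.1
  rw [slope_def_field] at h1
  have h2 : 0 < ξ - p := sub_pos.2 hξ.1
  have h3 : 0 < deriv f ξ - deriv f p := by
    have := mul_pos h1 h2
    rwa [div_mul_cancel₀ _ h2.ne'] at this
  have h4 : deriv f ξ ≤ 0 := by
    rw [hξeq]
    exact div_nonpos_of_nonpos_of_nonneg (sub_nonpos.2 hbmem.2) (sub_nonneg.2 hpb.le)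
  rw [hgp] at h3
  linarith

/-- Key maximum-principle lemma: a bounded solution with bounded `p`-derivative
and zero terminal data is nonpositive. -/
lemma aux_key (σ T c : ℝ) (hσ : 0 < σ) (hT : 0 < T)
    (v : ℝ → ℝ → ℝ)
    (hcont : ContinuousOn (fun q : ℝ × ℝ => v q.1 q.2)
      (Set.Icc (0 : ℝ) T ×ˢ Set.univ))
    (hb : ∃ M, ∀ t ∈ Set.Icc (0 : ℝ) T, ∀ p : ℝ, |v t p| ≤ M)
    (hvt : ∀ p : ℝ, ∀ t ∈ Set.Ico (0 : ℝ) T,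
      DifferentiableAt ℝ (fun s => v s p) t)
    (hvp : ∀ t ∈ Set.Icc (0 : ℝ) T, ContDiff ℝ 2 (fun p => v t p))
    (hbp : ∃ M, ∀ t ∈ Set.Icc (0 : ℝ) T, ∀ p : ℝ,
      |deriv (fun q => v t q) p| ≤ M)
    (hpde : ∀ t ∈ Set.Ico (0 : ℝ) T, ∀ p : ℝ,
      0 = deriv (fun s => v s p) t
        + (1 / 2) * σ ^ 2 * deriv (deriv (fun q => v t q)) p
        + c * (deriv (fun q => v t q) p) ^ 2)
    (hterm : ∀ p : ℝ, v T p = 0) :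
    ∀ t ∈ Set.Icc (0 : ℝ) T, ∀ p : ℝ, v t p ≤ 0 := by
  obtain ⟨B, hB⟩ := hb
  obtain ⟨M, hM⟩ := hbp
  have h00 : (0 : ℝ) ∈ Set.Icc (0 : ℝ) T := ⟨le_refl 0, hT.le⟩
  have hBpos : 0 ≤ B := le_trans (abs_nonneg _) (hB 0 h00 0)
  have hMpos : 0 ≤ M := le_trans (abs_nonneg _) (hM 0 h00 0)
  set A : ℝ := σ ^ 2 / 2 + |c| * M + 1 with hA_def
  have hApos : 0 < A := by positivity
  intro t₁ ht₁ p₁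
  set CP : ℝ := Real.cosh p₁ * Real.exp (A * T) with hCP_def
  have hCPpos : 0 < CP := by positivity
  have hmain : ∀ δ : ℝ, 0 < δ → v t₁ p₁ ≤ δ * CP := by
    intro δ hδ
    -- choose R
    set R : ℝ := max (|p₁| + 1) ((2 * B + δ * CP) / δ + 1) with hR_def
    have hRp1 : |p₁| < R := lt_of_lt_of_le (by linarith) (le_max_left _ _)
    have hRpos : 0 < R := lt_of_le_of_lt (abs_nonneg p₁) hRp1
    have hcoshR : 2 * B + δ * CP < δ * Real.cosh R := by
      have h1 : (2 * B + δ * CP) / δ + 1 ≤ R := le_max_right _ _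
      have h2 : R ≤ Real.sinh R := Real.self_le_sinh_iff.mpr hRpos.le
      have h3 : Real.sinh R < Real.cosh R := Real.sinh_lt_cosh R
      have h4 : (2 * B + δ * CP) / δ < Real.cosh R := by linarith
      calc 2 * B + δ * CP = (2 * B + δ * CP) / δ * δ := by
            rw [div_mul_cancel₀ _ hδ.ne']
        _ < Real.cosh R * δ := mul_lt_mul_of_pos_right h4 hδ
        _ = δ * Real.cosh R := mul_comm _ _
    -- compact maximization
    set W : ℝ × ℝ → ℝ :=
      fun q => v q.1 q.2 - δ * (Real.cosh q.2 * Real.exp (A * (T - q.1))) with hW_def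
    set K : Set (ℝ × ℝ) := Set.Icc (0 : ℝ) T ×ˢ Set.Icc (-R) R with hK_def
    have hKcomp : IsCompact K := (isCompact_Icc).prod isCompact_Icc
    have hKne : ((t₁, p₁) : ℝ × ℝ) ∈ K := by
      refine ⟨ht₁, ?_⟩
      rw [Set.mem_Icc]
      exact ⟨by linarith [neg_abs_le p₁], by linarith [le_abs_self p₁]⟩
    have hWcont : ContinuousOn W K := by
      apply ContinuousOn.sub
      · exact hcont.mono (Set.prod_mono subset_rfl (Set.subset_univ _))
      · exact (Continuous.continuousOn (by fun_prop))
    obtain ⟨q₀, hq₀K, hq₀max⟩ := hKcomp.exists_isMaxOn ⟨_, hKne⟩ hWcont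
    obtain ⟨ht₀, hp₀⟩ := hq₀K
    set t₀ : ℝ := q₀.1 with ht₀_def
    set p₀ : ℝ := q₀.2 with hp₀_def
    have hWle : W (t₁, p₁) ≤ W q₀ := hq₀max hKne
    have hE₀ : (1 : ℝ) ≤ Real.exp (A * (T - t₀)) := by
      apply Real.one_le_exp
      have := ht₀.2; nlinarith [hApos]
    have hE₁ : Real.exp (A * (T - t₁)) ≤ Real.exp (A * T) := by
      apply Real.exp_le_exp.2
      have := ht₁.1; nlinarith [hApos]
    -- p₀ is interior
    have hp₀lt : |p₀| < R := by
      by_contra hcon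
      push_neg at hcon
      have habs : |p₀| = R := le_antisymm (abs_le.mpr hp₀) hcon
      have hcosheq : Real.cosh p₀ = Real.cosh R := by
        rw [← Real.cosh_abs, habs]
      have hup : W q₀ ≤ B - δ * Real.cosh R := by
        have h1 : v t₀ p₀ ≤ B := le_trans (le_abs_self _) (hB t₀ ht₀ p₀)
        have h2 : δ * Real.cosh R ≤ δ * (Real.cosh p₀ * Real.exp (A * (T - t₀))) := by
          rw [hcosheq]
          have h2a : Real.cosh R * 1 ≤ Real.cosh R * Real.exp (A * (T - t₀)) :=
            mul_le_mul_of_nonneg_left hE₀ (Real.cosh_pos (x := R)).le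
          have h2b := mul_le_mul_of_nonneg_left h2a hδ.le
          simpa using h2b
        have h3 : W q₀ = v t₀ p₀ - δ * (Real.cosh p₀ * Real.exp (A * (T - t₀))) := rfl
        linarith [h3]
      have hlo : -B - δ * CP ≤ W (t₁, p₁) := by
        have h1 : -B ≤ v t₁ p₁ := neg_le_of_abs_le (hB t₁ ht₁ p₁)
        have h2 : δ * (Real.cosh p₁ * Real.exp (A * (T - t₁))) ≤ δ * CP := by
          rw [hCP_def]
          exact mul_le_mul_of_nonneg_left
            (mul_le_mul_of_nonneg_left hE₁ (Real.cosh_pos (x := p₁)).le) hδ.le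
        have h3 : W (t₁, p₁) = v t₁ p₁ - δ * (Real.cosh p₁ * Real.exp (A * (T - t₁))) := rfl
        linarith [h3]
      linarith
    -- t₀ = T
    have ht₀T : t₀ = T := by
      by_contra hcon
      have hlt : t₀ < T := lt_of_le_of_ne ht₀.2 hcon
      have ht₀Ico : t₀ ∈ Set.Ico (0 : ℝ) T := ⟨ht₀.1, hlt⟩
      set E₀ : ℝ := Real.exp (A * (T - t₀)) with hE₀_def
      have hE₀pos : 0 < E₀ := Real.exp_pos _
      -- spatial part
      set f : ℝ → ℝ := fun p => v t₀ p - δ * (Real.cosh p * E₀) with hf_def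
      have hfC2 : ContDiff ℝ 2 f :=
        (hvp t₀ ht₀).sub (contDiff_const.mul (Real.contDiff_cosh.mul contDiff_const))
      have hmaxf : IsLocalMax f p₀ := by
        have hmem : Set.Ioo (-R) R ∈ 𝓝 p₀ :=
          Ioo_mem_nhds (abs_lt.mp hp₀lt).1 (abs_lt.mp hp₀lt).2
        filter_upwards [hmem] with p hp
        have : W (t₀, p) ≤ W q₀ := hq₀max ⟨ht₀, ⟨hp.1.le, hp.2.le⟩⟩
        exact this
      have hvd : ∀ p : ℝ, DifferentiableAt ℝ (fun q => v t₀ q) p :=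
        fun p => ((hvp t₀ ht₀).differentiable (by norm_num)).differentiableAt
      have hφd : ∀ p : ℝ, HasDerivAt (fun q => δ * (Real.cosh q * E₀))
          (δ * (Real.sinh p * E₀)) p := by
        intro p
        have := ((Real.hasDerivAt_cosh p).mul_const E₀).const_mul δ
        simpa using this
      have hderiv_f : ∀ p : ℝ, deriv f p
          = deriv (fun q => v t₀ q) p - δ * (Real.sinh p * E₀) := by
        intro p
        rw [hf_def]
        rw [deriv_fun_sub (hvd p) (hφd p).differentiableAt, (hφd p).deriv]
      have hfirst : deriv (fun q => v t₀ q) p₀ = δ * (Real.sinh p₀ * E₀) := by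
        have h0 : deriv f p₀ = 0 := hmaxf.deriv_eq_zero
        rw [hderiv_f p₀] at h0
        linarith
      have hsecond : deriv (deriv (fun q => v t₀ q)) p₀ ≤ δ * (Real.cosh p₀ * E₀) := by
        have h0 : deriv (deriv f) p₀ ≤ 0 := aux_second_deriv_nonpos hfC2 hmaxf
        have heq : deriv f = fun p => deriv (fun q => v t₀ q) p - δ * (Real.sinh p * E₀) :=
          funext hderiv_f
        rw [heq] at h0
        have hvd2 : DifferentiableAt ℝ (deriv fun q => v t₀ q) p₀ := by
          have hf2 : ContDiff ℝ (1 + 1 : WithTop ℕ∞) (fun q => v t₀ q) := by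
            rw [show (1 + 1 : WithTop ℕ∞) = 2 by norm_num]; exact hvp t₀ ht₀
          exact (((contDiff_succ_iff_deriv.mp hf2).2.2).differentiable one_ne_zero).differentiableAt
        have hψd : HasDerivAt (fun p => δ * (Real.sinh p * E₀))
            (δ * (Real.cosh p₀ * E₀)) p₀ := by
          have := ((Real.hasDerivAt_sinh p₀).mul_const E₀).const_mul δ
          simpa using this
        rw [deriv_fun_sub hvd2 hψd.differentiableAt, hψd.deriv] at h0
        linarith
      -- temporal part
      have hgd : DifferentiableAt ℝ (fun s => v s p₀) t₀ := hvt p₀ t₀ ht₀Ico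
      have hexp_d : HasDerivAt (fun s : ℝ => Real.exp (A * (T - s)))
          (Real.exp (A * (T - t₀)) * (-A)) t₀ := by
        have h1 : HasDerivAt (fun s : ℝ => A * (T - s)) (-A) t₀ := by
          have := ((hasDerivAt_id t₀).const_sub T).const_mul A
          simpa using this
        exact h1.exp
      have hφtd : HasDerivAt (fun s : ℝ => δ * (Real.cosh p₀ * Real.exp (A * (T - s))))
          (δ * (Real.cosh p₀ * (Real.exp (A * (T - t₀)) * (-A)))) t₀ :=
        ((hexp_d.const_mul (Real.cosh p₀)).const_mul δ)
      set g : ℝ → ℝ := fun s => v s p₀ - δ * (Real.cosh p₀ * Real.exp (A * (T - s)))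
        with hg_def
      have hgdiff : DifferentiableAt ℝ g t₀ := hgd.sub hφtd.differentiableAt
      have hgmax : ∀ s ∈ Set.Icc t₀ T, g s ≤ g t₀ := by
        intro s hs
        have hsK : ((s, p₀) : ℝ × ℝ) ∈ K := ⟨⟨le_trans ht₀.1 hs.1, hs.2⟩, hp₀⟩
        have h1 : W (s, p₀) ≤ W q₀ := hq₀max hsK
        exact h1
      have hgderiv : deriv g t₀ ≤ 0 := aux_deriv_nonpos_right hlt hgdiff hgmax
      have hgderiv_eq : deriv g t₀ = deriv (fun s => v s p₀) t₀
          + δ * (Real.cosh p₀ * E₀) * A := by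
        rw [hg_def, deriv_fun_sub hgd hφtd.differentiableAt, hφtd.deriv]
        ring
      have htime : deriv (fun s => v s p₀) t₀ ≤ -(A * (δ * (Real.cosh p₀ * E₀))) := by
        rw [hgderiv_eq] at hgderiv
        linarith
      -- PDE contradiction
      have hpde₀ := hpde t₀ ht₀Ico p₀
      set C : ℝ := δ * (Real.cosh p₀ * E₀) with hC_def
      have hCpos : 0 < C := by positivity
      have hdv1 : |deriv (fun q => v t₀ q) p₀| ≤ M := hM t₀ ht₀ p₀
      have habs_dv1 : |deriv (fun q => v t₀ q) p₀| ≤ C := by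
        rw [hfirst, abs_mul, abs_mul, abs_of_nonneg hδ.le, abs_of_nonneg hE₀pos.le,
          Real.abs_sinh]
        have h1 : Real.sinh |p₀| ≤ Real.cosh p₀ := by
          rw [← Real.cosh_abs]
          exact (Real.sinh_lt_cosh _).le
        rw [hC_def]
        exact mul_le_mul_of_nonneg_left
          (mul_le_mul_of_nonneg_right h1 hE₀pos.le) hδ.le
      have hsq : c * (deriv (fun q => v t₀ q) p₀) ^ 2 ≤ |c| * M * C := by
        have h1 : c * (deriv (fun q => v t₀ q) p₀) ^ 2
            ≤ |c| * (deriv (fun q => v t₀ q) p₀) ^ 2 := by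
          nlinarith [le_abs_self c, sq_nonneg (deriv (fun q => v t₀ q) p₀)]
        have h2 : (deriv (fun q => v t₀ q) p₀) ^ 2 ≤ M * C := by
          have h0 := abs_nonneg (deriv (fun q => v t₀ q) p₀)
          nlinarith [sq_abs (deriv (fun q => v t₀ q) p₀), hdv1, habs_dv1]
        nlinarith [abs_nonneg c]
      have hsecond' : (1 / 2) * σ ^ 2 * deriv (deriv (fun q => v t₀ q)) p₀
          ≤ σ ^ 2 / 2 * C := by
        have := mul_le_mul_of_nonneg_left hsecond
          (by positivity : (0:ℝ) ≤ (1 / 2) * σ ^ 2)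
        nlinarith [this]
      have hAC : A * C = σ ^ 2 / 2 * C + |c| * M * C + C := by rw [hA_def]; ring
      clear_value C
      clear_value A
      generalize hX1 : deriv (fun s => v s p₀) t₀ = X1 at htime hpde₀
      generalize hX2 : deriv (deriv (fun q => v t₀ q)) p₀ = X2 at hsecond' hpde₀
      generalize hX3 : deriv (fun q => v t₀ q) p₀ = X3 at hsq hpde₀
      have : (0 : ℝ) < 0 := by
        calc (0 : ℝ) = X1 + (1 / 2) * σ ^ 2 * X2 + c * X3 ^ 2 := hpde₀
          _ ≤ -(A * C) + σ ^ 2 / 2 * C + |c| * M * C := by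
              nlinarith [htime, hsecond', hsq]
          _ = -C := by linarith [hAC]
          _ < 0 := neg_lt_zero.mpr hCpos
      exact absurd this (lt_irrefl 0)
    -- conclude
    have hWT : W q₀ ≤ 0 := by
      have h : W q₀ = v t₀ p₀ - δ * (Real.cosh p₀ * Real.exp (A * (T - t₀))) := rfl
      rw [h, ht₀T, hterm p₀, sub_self, mul_zero, Real.exp_zero, mul_one]
      nlinarith [Real.cosh_pos (x := p₀), hδ]
    have hW1 : W (t₁, p₁) = v t₁ p₁ - δ * (Real.cosh p₁ * Real.exp (A * (T - t₁))) := rfl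
    have h5 : v t₁ p₁ ≤ δ * (Real.cosh p₁ * Real.exp (A * (T - t₁))) := by
      have := le_trans hWle hWT
      linarith [hW1]
    calc v t₁ p₁ ≤ δ * (Real.cosh p₁ * Real.exp (A * (T - t₁))) := h5
      _ ≤ δ * CP := by
          rw [hCP_def]
          exact mul_le_mul_of_nonneg_left
            (mul_le_mul_of_nonneg_left hE₁ (Real.cosh_pos (x := p₁)).le) hδ.le
  by_contra hcon
  push_neg at hcon
  have h6 := hmain (v t₁ p₁ / (2 * CP)) (by positivity)
  rw [div_mul_eq_mul_div, mul_comm] at h6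
  have h7 : CP * v t₁ p₁ / (2 * CP) = v t₁ p₁ / 2 := by
    field_simp
  linarith

/-- Uniqueness for the Burgers-type equation with zero terminal condition: a
bounded `C^{1,2}` solution of `0 = v_t + ½σ²v_pp + c v_p²` on `[0,T) × ℝ` with
bounded `p`-derivative and `v(T,·) = 0` vanishes identically. Consequently, in
a zero-sum risk-neutral game with linear costs the aggregate equilibrium
trading speed `(λ/(κ(N+1))) v_p` vanishes identically. -/
theorem stmt_14 (σ T c : ℝ) (hσ : 0 < σ) (hT : 0 < T)
    (v : ℝ → ℝ → ℝ)
    (hcont : ContinuousOn (fun q : ℝ × ℝ => v q.1 q.2)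
      (Set.Icc (0 : ℝ) T ×ˢ Set.univ))
    (hb : ∃ M, ∀ t ∈ Set.Icc (0 : ℝ) T, ∀ p : ℝ, |v t p| ≤ M)
    (hvt : ∀ p : ℝ, ∀ t ∈ Set.Ico (0 : ℝ) T,
      DifferentiableAt ℝ (fun s => v s p) t)
    (hvp : ∀ t ∈ Set.Icc (0 : ℝ) T, ContDiff ℝ 2 (fun p => v t p))
    (hbp : ∃ M, ∀ t ∈ Set.Icc (0 : ℝ) T, ∀ p : ℝ,
      |deriv (fun q => v t q) p| ≤ M)
    (hpde : ∀ t ∈ Set.Ico (0 : ℝ) T, ∀ p : ℝ,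
      0 = deriv (fun s => v s p) t
        + (1 / 2) * σ ^ 2 * deriv (deriv (fun q => v t q)) p
        + c * (deriv (fun q => v t q) p) ^ 2)
    (hterm : ∀ p : ℝ, v T p = 0) :
    (∀ t ∈ Set.Icc (0 : ℝ) T, ∀ p : ℝ, v t p = 0) ∧
    (∀ (N : ℕ) (κ lam : ℝ), ∀ t ∈ Set.Icc (0 : ℝ) T, ∀ p : ℝ,
      (lam / (κ * ((N : ℝ) + 1))) * deriv (fun q => v t q) p = 0) := by
  have h1 := aux_key σ T c hσ hT v hcont hb hvt hvp hbp hpde hterm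
  have hneg_deriv : ∀ t p : ℝ, deriv (fun q => -v t q) p = -deriv (fun q => v t q) p :=
    fun t p => deriv.neg
  have h2 := aux_key σ T (-c) hσ hT (fun t p => -v t p)
    (hcont.neg)
    (by obtain ⟨M, hM⟩ := hb
        exact ⟨M, fun t ht p => by rw [abs_neg] at *; exact hM t ht p⟩)
    (fun p t ht => (hvt p t ht).neg)
    (fun t ht => (hvp t ht).neg)
    (by obtain ⟨M, hM⟩ := hbp
        refine ⟨M, fun t ht p => ?_⟩
        rw [hneg_deriv t p, abs_neg]
        exact hM t ht p)
    (by intro t ht p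
        have hp := hpde t ht p
        have e1 : deriv (fun s => -v s p) t = -deriv (fun s => v s p) t := deriv.neg
        have e2 : (deriv fun q => -v t q) = fun p => -deriv (fun q => v t q) p :=
          funext fun p => hneg_deriv t p
        have e3 : deriv (deriv fun q => -v t q) p
            = -deriv (deriv fun q => v t q) p := by
          rw [e2]; exact deriv.neg
        rw [e1, e3, hneg_deriv t p]
        ring_nf
        ring_nf at hp
        linarith)
    (fun p => by show -v T p = 0; rw [hterm p, neg_zero])
  have hzero : ∀ t ∈ Set.Icc (0 : ℝ) T, ∀ p : ℝ, v t p = 0 := by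
    intro t ht p
    have ha := h1 t ht p
    have hb' := h2 t ht p
    simp only [neg_nonpos, neg_le] at hb'
    linarith
  refine ⟨hzero, ?_⟩
  intro N κ lam t ht p
  have he : (fun q => v t q) = fun _ : ℝ => (0 : ℝ) := funext fun q => hzero t ht q
  rw [he, deriv_const, mul_zero]
end

section
/- Let A > 0, B ≠ 0, T > 0, L ≥ 0, and let G: ℝ → ℝ be Lipschitz continuous with constant L (and such that exp((B/A)G(p + ·)) is γ-integrable, which holds automatically since G has at most linear growth). Define v(t, p) = (A/B) · log ∫_ℝ exp( (B/A) · G( p + √(A(T − t)) z ) ) dγ(z) for (t, p) ∈ [0, T) × ℝ, where γ is the standard Gaussian measure on ℝ. Then for every t ∈ [0, T) the function p ↦ v(t, p) is Lipschitz continuous with constant L; in particular |∂_p v(t, p)| ≤ L wherever the derivative exists. -/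
open MeasureTheory ProbabilityTheory Real

lemma lin_growth_aux {L' : ℝ} (hL' : 0 ≤ L') {G : ℝ → ℝ}
    (hG : LipschitzWith L'.toNNReal G) (x : ℝ) : |G x| ≤ |G 0| + L' * |x| := by
  have h := hG.dist_le_mul x 0
  rw [Real.dist_eq, Real.dist_eq, sub_zero, Real.coe_toNNReal L' hL'] at h
  have := abs_sub_abs_le_abs_sub (G x) (G 0)
  rw [abs_sub_comm] at this
  linarith [abs_sub_comm (G x) (G 0) ▸ this, h,
    (abs_sub_abs_le_abs_sub (G x) (G 0))]

lemma integrable_aux (c : ℝ) {L' : ℝ} (s : ℝ) (hL' : 0 ≤ L')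
    {G : ℝ → ℝ} (hG : LipschitzWith L'.toNNReal G) (p : ℝ) :
    Integrable (fun z => Real.exp (c * G (p + s * z))) (gaussianReal 0 1) := by
  have hGcont : Continuous G := hG.continuous
  rw [gaussianReal_of_var_ne_zero 0 one_ne_zero,
    integrable_withDensity_iff (measurable_gaussianPDF 0 1)
      (ae_of_all _ fun x => ENNReal.ofReal_lt_top)]
  have htoReal : ∀ z : ℝ, (gaussianPDF 0 1 z).toReal = gaussianPDFReal 0 1 z := fun z =>
    ENNReal.toReal_ofReal (gaussianPDFReal_nonneg 0 1 z)
  simp only [htoReal]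
  have ha : (0:ℝ) ≤ |c| * L' * |s| := by positivity
  set a : ℝ := |c| * L' * |s|
  set E : ℝ := |c| * (|G 0| + L' * |p|) with hE
  set K : ℝ := (Real.sqrt (2 * π))⁻¹ * Real.exp (E + a ^ 2) with hK
  have hmeas : Measurable fun z : ℝ =>
      Real.exp (c * G (p + s * z)) * gaussianPDFReal 0 1 z :=
    (Real.measurable_exp.comp (measurable_const.mul
      (hGcont.measurable.comp (measurable_const.add (measurable_const.mul measurable_id))))).mul
      (measurable_gaussianPDFReal 0 1)
  refine Integrable.mono ((integrable_exp_neg_mul_sq (by norm_num : (0:ℝ) < 1/4)).const_mul K)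
    hmeas.aestronglyMeasurable (ae_of_all _ fun z => ?_)
  have hpdf_pos : 0 ≤ gaussianPDFReal 0 1 z := gaussianPDFReal_nonneg 0 1 z
  have hbound : c * G (p + s * z) ≤ E + a * |z| := by
    calc c * G (p + s * z) ≤ |c| * |G (p + s * z)| := by
          rw [← abs_mul]; exact le_abs_self _
      _ ≤ |c| * (|G 0| + L' * |p + s * z|) :=
          mul_le_mul_of_nonneg_left (lin_growth_aux hL' hG _) (abs_nonneg c)
      _ ≤ |c| * (|G 0| + L' * (|p| + |s| * |z|)) := by
          gcongr
          calc |p + s * z| ≤ |p| + |s * z| := abs_add_le _ _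
            _ = |p| + |s| * |z| := by rw [abs_mul]
      _ = E + a * |z| := by rw [hE]; ring
  have hpdf : gaussianPDFReal 0 1 z ≤ (Real.sqrt (2 * π))⁻¹ * Real.exp (-(1/2) * z ^ 2) := by
    rw [gaussianPDFReal]
    simp only [NNReal.coe_one, mul_one, sub_zero]
    apply le_of_eq
    ring_nf
  have haz : a * |z| ≤ a ^ 2 + (1/4) * z ^ 2 := by
    nlinarith [sq_nonneg (a - |z| / 2), sq_abs z]
  have key : Real.exp (c * G (p + s * z)) * gaussianPDFReal 0 1 z ≤
      K * Real.exp (-(1/4) * z ^ 2) := by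
    calc Real.exp (c * G (p + s * z)) * gaussianPDFReal 0 1 z
        ≤ Real.exp (E + a * |z|) * ((Real.sqrt (2 * π))⁻¹ * Real.exp (-(1/2) * z ^ 2)) :=
          mul_le_mul (Real.exp_le_exp.2 hbound) hpdf hpdf_pos (Real.exp_pos _).le
      _ = (Real.sqrt (2 * π))⁻¹ * Real.exp (E + a * |z| + -(1/2) * z ^ 2) := by
          simp only [Real.exp_add]; ring
      _ ≤ (Real.sqrt (2 * π))⁻¹ * Real.exp (E + a ^ 2 + -(1/4) * z ^ 2) := by
          apply mul_le_mul_of_nonneg_left _ (by positivity)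
          rw [Real.exp_le_exp]; nlinarith
      _ = K * Real.exp (-(1/4) * z ^ 2) := by
          rw [hK]; simp only [Real.exp_add]; ring
  rw [Real.norm_eq_abs, Real.norm_eq_abs, abs_of_nonneg
    (mul_nonneg (Real.exp_pos _).le hpdf_pos), abs_of_nonneg (by positivity)]
  exact key

/-- Gradient bound for the Cole–Hopf solution: if `G` is `L`-Lipschitz, then
for every `t ∈ [0,T)` the function
`p ↦ (A/B) log ∫ exp((B/A) G(p + √(A(T−t)) z)) dγ(z)` is `L`-Lipschitz; in
particular `|∂ₚ v(t,p)| ≤ L` wherever the derivative exists. -/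
theorem stmt_15 (A B T L : ℝ) (hA : 0 < A) (hB : B ≠ 0) (hT : 0 < T)
    (hL : 0 ≤ L)
    (G : ℝ → ℝ) (hG : LipschitzWith L.toNNReal G)
    (v : ℝ → ℝ → ℝ)
    (hv : ∀ t p, v t p = (A / B) * Real.log
      (∫ z, Real.exp ((B / A) * G (p + Real.sqrt (A * (T - t)) * z))
        ∂(gaussianReal 0 1))) :
    (∀ t ∈ Set.Ico (0 : ℝ) T, LipschitzWith L.toNNReal (fun p => v t p)) ∧
    (∀ t ∈ Set.Ico (0 : ℝ) T, ∀ p : ℝ,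
      DifferentiableAt ℝ (fun q => v t q) p →
        |deriv (fun q => v t q) p| ≤ L) := by
  have hlip : ∀ t ∈ Set.Ico (0 : ℝ) T, LipschitzWith L.toNNReal (fun p => v t p) := by
    intro t _
    set c : ℝ := B / A with hc
    set s : ℝ := Real.sqrt (A * (T - t)) with hs
    set I : ℝ → ℝ := fun p => ∫ z, Real.exp (c * G (p + s * z)) ∂(gaussianReal 0 1) with hI
    have hint : ∀ p, Integrable (fun z => Real.exp (c * G (p + s * z))) (gaussianReal 0 1) :=
      fun p => integrable_aux c s hL hG p
    have hIpos : ∀ p, 0 < I p := fun p => integral_exp_pos (hint p)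
    have hkey : ∀ p q : ℝ, Real.log (I p) - Real.log (I q) ≤ |c| * L * |p - q| := by
      intro p q
      have hmono : I p ≤ Real.exp (|c| * L * |p - q|) * I q := by
        rw [hI]
        simp only
        rw [← integral_const_mul]
        refine integral_mono (hint p) ((hint q).const_mul _) fun z => ?_
        rw [← Real.exp_add, Real.exp_le_exp]
        have hd := hG.dist_le_mul (p + s * z) (q + s * z)
        rw [Real.dist_eq, Real.dist_eq, Real.coe_toNNReal L hL] at hd
        have hd' : |G (p + s * z) - G (q + s * z)| ≤ L * |p - q| := by
          convert hd using 2; ring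
        have h2 : c * (G (p + s * z) - G (q + s * z)) ≤ |c| * (L * |p - q|) := by
          calc c * (G (p + s * z) - G (q + s * z))
              ≤ |c * (G (p + s * z) - G (q + s * z))| := le_abs_self _
            _ = |c| * |G (p + s * z) - G (q + s * z)| := abs_mul _ _
            _ ≤ |c| * (L * |p - q|) :=
                mul_le_mul_of_nonneg_left hd' (abs_nonneg c)
        nlinarith
      have hlog := Real.log_le_log (hIpos p) hmono
      rw [Real.log_mul (Real.exp_pos _).ne' (hIpos q).ne', Real.log_exp] at hlog
      linarith
    have habskey : ∀ p q : ℝ, |Real.log (I p) - Real.log (I q)| ≤ |c| * L * |p - q| := by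
      intro p q
      rw [abs_sub_le_iff]
      refine ⟨hkey p q, ?_⟩
      rw [abs_sub_comm p q]
      exact hkey q p
    refine LipschitzWith.of_dist_le_mul fun p q => ?_
    rw [Real.dist_eq, Real.dist_eq, Real.coe_toNNReal L hL, hv, hv]
    have heq : (A / B) * Real.log (I p) - (A / B) * Real.log (I q) =
        (A / B) * (Real.log (I p) - Real.log (I q)) := by ring
    rw [heq, abs_mul]
    have hAB : |A / B| * |c| = 1 := by
      rw [← abs_mul, hc]
      rw [div_mul_div_comm, mul_comm A B, mul_div_mul_left _ _ hB, div_self hA.ne', abs_one]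
    calc |A / B| * |Real.log (I p) - Real.log (I q)|
        ≤ |A / B| * (|c| * L * |p - q|) :=
          mul_le_mul_of_nonneg_left (habskey p q) (abs_nonneg _)
      _ = (|A / B| * |c|) * (L * |p - q|) := by ring
      _ = L * |p - q| := by rw [hAB, one_mul]
  refine ⟨hlip, fun t ht p _ => ?_⟩
  have h := norm_deriv_le_of_lipschitz (𝕜 := ℝ) (hlip t ht) (x₀ := p)
  rwa [Real.norm_eq_abs, Real.coe_toNNReal L hL] at h
end

section
/- Let σ, λ, κ, T > 0 and let H: ℝ → ℝ be Lipschitz continuous with constant L and continuously differentiable. For each integer N ≥ 1 set B_N := 2λ²N/(κ(N+1)²), define v^{(N)}(t, p) = (σ²/B_N) · log ∫_ℝ exp( (B_N/σ²) · H( p + σ√(T − t) z ) ) dγ(z) on [0,T) × ℝ with γ the standard Gaussian measure, and define the aggregate equilibrium trading speed Ẋ*_N(t, p) := (λ/(κ(N+1))) · ∂_p v^{(N)}(t, p). Then for all (t, p) ∈ [0, T) × ℝ and all N: |Ẋ*_N(t, p)| ≤ λL/(κ(N+1)), and in particular Ẋ*_N(t, p) → 0 as N → ∞, uniformly in (t,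 p). -/
open MeasureTheory ProbabilityTheory

open Real in
lemma gauss_int_exp_abs (k : ℝ) :
    Integrable (fun z : ℝ => Real.exp (k * |z|)) (gaussianReal 0 1) := by
  rw [gaussianReal_of_var_ne_zero 0 one_ne_zero,
    integrable_withDensity_iff (measurable_gaussianPDF 0 1)
      (ae_of_all _ fun x => ENNReal.ofReal_lt_top)]
  have hmaj : Integrable (fun z : ℝ =>
      (Real.exp (k ^ 2) * (Real.sqrt (2 * π))⁻¹) * Real.exp (-((1:ℝ)/4) * z ^ 2)) := by
    exact (integrable_exp_neg_mul_sq (by norm_num : (0:ℝ) < 1/4)).const_mul _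
  refine hmaj.mono' ?_ (ae_of_all _ fun z => ?_)
  · exact ((Real.measurable_exp.comp (measurable_const.mul measurable_abs)).mul
      (measurable_gaussianPDF 0 1).ennreal_toReal).aestronglyMeasurable
  · have hpdf : (gaussianPDF 0 1 z).toReal = (Real.sqrt (2 * π))⁻¹ * Real.exp (- z ^ 2 / 2) := by
      rw [gaussianPDF, ENNReal.toReal_ofReal (gaussianPDFReal_nonneg 0 1 z), gaussianPDFReal]
      norm_num
    rw [Real.norm_eq_abs, hpdf]
    have h1 : 0 ≤ Real.exp (k * |z|) * ((Real.sqrt (2 * π))⁻¹ * Real.exp (- z ^ 2 / 2)) := by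
      positivity
    rw [abs_of_nonneg h1]
    have hkz : k * |z| ≤ k ^ 2 + z ^ 2 / 4 := by
      nlinarith [abs_nonneg z, sq_abs z, sq_nonneg (k - |z| / 2)]
    have : Real.exp (k * |z|) * Real.exp (- z ^ 2 / 2)
        ≤ Real.exp (k ^ 2) * Real.exp (-((1:ℝ)/4) * z ^ 2) := by
      rw [← Real.exp_add, ← Real.exp_add]
      exact Real.exp_le_exp.2 (by linarith)
    calc Real.exp (k * |z|) * ((Real.sqrt (2 * π))⁻¹ * Real.exp (- z ^ 2 / 2))
        = (Real.exp (k * |z|) * Real.exp (- z ^ 2 / 2)) * (Real.sqrt (2 * π))⁻¹ := by ring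
      _ ≤ (Real.exp (k ^ 2) * Real.exp (-((1:ℝ)/4) * z ^ 2)) * (Real.sqrt (2 * π))⁻¹ := by
          apply mul_le_mul_of_nonneg_right this (by positivity)
      _ = (Real.exp (k ^ 2) * (Real.sqrt (2 * π))⁻¹) * Real.exp (-((1:ℝ)/4) * z ^ 2) := by ring

section
variable {a c L : ℝ} (ha : 0 < a) (hL : 0 ≤ L) {H : ℝ → ℝ}
  (hHc : Continuous H) (hHL : ∀ x y, |H x - H y| ≤ L * |x - y|)

include ha hL hHc hHL

lemma int_exp (p : ℝ) :
    Integrable (fun z : ℝ => Real.exp (a * H (p + c * z))) (gaussianReal 0 1) := by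
  refine ((gauss_int_exp_abs (a * L * |c|)).const_mul (Real.exp (a * H p))).mono'
    ((Real.continuous_exp.comp (continuous_const.mul (hHc.comp
      (continuous_const.add (continuous_const.mul continuous_id))))).aestronglyMeasurable)
    (ae_of_all _ fun z => ?_)
  rw [Real.norm_eq_abs, abs_of_nonneg (Real.exp_pos _).le, ← Real.exp_add]
  apply Real.exp_le_exp.2
  have := hHL (p + c * z) p
  have h1 : H (p + c * z) ≤ H p + L * |c * z| := by
    have h := (abs_le.1 (hHL (p + c * z) p)).2
    rw [add_sub_cancel_left] at h
    linarith
  have h2 : a * H (p + c * z) ≤ a * (H p + L * |c * z|) :=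
    mul_le_mul_of_nonneg_left h1 ha.le
  calc a * H (p + c * z) ≤ a * H p + a * (L * |c * z|) := by linarith
    _ = a * H p + a * L * |c| * |z| := by rw [abs_mul]; ring

lemma log_int_lip :
    LipschitzWith (a * L).toNNReal
      (fun p => Real.log (∫ z, Real.exp (a * H (p + c * z)) ∂(gaussianReal 0 1))) := by
  have hpos : ∀ p : ℝ, 0 < ∫ z, Real.exp (a * H (p + c * z)) ∂(gaussianReal 0 1) :=
    fun p => integral_exp_pos (int_exp ha hL hHc hHL p)
  have key : ∀ p q : ℝ,
      Real.log (∫ z, Real.exp (a * H (p + c * z)) ∂(gaussianReal 0 1))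
      ≤ Real.log (∫ z, Real.exp (a * H (q + c * z)) ∂(gaussianReal 0 1)) + a * L * |p - q| := by
    intro p q
    have hmono : (∫ z, Real.exp (a * H (p + c * z)) ∂(gaussianReal 0 1))
        ≤ ∫ z, Real.exp (a * L * |p - q|) * Real.exp (a * H (q + c * z)) ∂(gaussianReal 0 1) := by
      refine integral_mono (int_exp ha hL hHc hHL p)
        ((int_exp ha hL hHc hHL q).const_mul _) fun z => ?_
      rw [← Real.exp_add]
      apply Real.exp_le_exp.2
      have h1 : H (p + c * z) - H (q + c * z) ≤ L * |p - q| := by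
        have := (abs_le.1 (hHL (p + c * z) (q + c * z))).2
        simpa [add_sub_add_right_eq_sub] using this
      nlinarith [ha.le]
    rw [integral_const_mul] at hmono
    calc Real.log (∫ z, Real.exp (a * H (p + c * z)) ∂(gaussianReal 0 1))
        ≤ Real.log (Real.exp (a * L * |p - q|) *
            ∫ z, Real.exp (a * H (q + c * z)) ∂(gaussianReal 0 1)) :=
          Real.log_le_log (hpos p) hmono
      _ = Real.log (∫ z, Real.exp (a * H (q + c * z)) ∂(gaussianReal 0 1)) + a * L * |p - q| := by
          rw [Real.log_mul (Real.exp_pos _).ne' (hpos q).ne', Real.log_exp]; ring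
  refine LipschitzWith.of_dist_le_mul fun p q => ?_
  rw [Real.dist_eq, Real.dist_eq, Real.coe_toNNReal _ (by positivity)]
  rw [abs_sub_le_iff]
  constructor
  · linarith [key p q]
  · have := key q p
    rw [abs_sub_comm] at this
    linarith
end

/-- The more informed competitors, the less aggregate manipulation: with
`B_N = 2λ²N/(κ(N+1)²)`, the Cole–Hopf aggregate value function `v⁽ᴺ⁾` of the
game where one player holds the `L`-Lipschitz option `H` yields an aggregate
equilibrium trading speed `Ẋ*_N = (λ/(κ(N+1))) ∂ₚ v⁽ᴺ⁾` satisfying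
`|Ẋ*_N| ≤ λL/(κ(N+1))`, which tends to `0` as `N → ∞`, uniformly in `(t,p)`. -/
theorem stmt_16 (σ lam κ T L : ℝ) (hσ : 0 < σ) (hlam : 0 < lam) (hκ : 0 < κ)
    (hT : 0 < T) (hL : 0 ≤ L)
    (H : ℝ → ℝ) (hH : ContDiff ℝ 1 H) (hHL : LipschitzWith L.toNNReal H)
    (B : ℕ → ℝ) (hB : ∀ N : ℕ, B N = 2 * lam ^ 2 * N / (κ * ((N : ℝ) + 1) ^ 2))
    (v : ℕ → ℝ → ℝ → ℝ)
    (hv : ∀ N : ℕ, 1 ≤ N → ∀ t p : ℝ, v N t p =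
      (σ ^ 2 / B N) * Real.log
        (∫ z, Real.exp ((B N / σ ^ 2) * H (p + σ * Real.sqrt (T - t) * z))
          ∂(gaussianReal 0 1)))
    (Xdot : ℕ → ℝ → ℝ → ℝ)
    (hX : ∀ (N : ℕ) (t p : ℝ),
      Xdot N t p = (lam / (κ * ((N : ℝ) + 1))) * deriv (fun q => v N t q) p) :
    (∀ N : ℕ, 1 ≤ N → ∀ t ∈ Set.Ico (0 : ℝ) T, ∀ p : ℝ,
      |Xdot N t p| ≤ lam * L / (κ * ((N : ℝ) + 1))) ∧
    (∀ ε > (0 : ℝ), ∃ N₀ : ℕ, 1 ≤ N₀ ∧ ∀ N ≥ N₀,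
      ∀ t ∈ Set.Ico (0 : ℝ) T, ∀ p : ℝ, |Xdot N t p| ≤ ε) := by
  have hHlip : ∀ x y : ℝ, |H x - H y| ≤ L * |x - y| := by
    intro x y
    have := hHL.dist_le_mul x y
    rwa [Real.dist_eq, Real.dist_eq, Real.coe_toNNReal _ hL] at this
  have hHc : Continuous H := hH.continuous
  -- main bound
  have main : ∀ N : ℕ, 1 ≤ N → ∀ t p : ℝ,
      |Xdot N t p| ≤ lam * L / (κ * ((N : ℝ) + 1)) := by
    intro N hN t p
    have hN1 : (0:ℝ) < (N:ℝ) + 1 := by positivity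
    have hBpos : 0 < B N := by
      rw [hB N]
      have hNpos : (0:ℝ) < (N:ℝ) := by exact_mod_cast hN
      positivity
    set a : ℝ := B N / σ ^ 2 with ha_def
    have ha : 0 < a := by positivity
    set c : ℝ := σ * Real.sqrt (T - t) with hc_def
    -- v N t is L-Lipschitz
    have hliplog := log_int_lip (c := c) ha hL hHc hHlip
    have hvlip : LipschitzWith L.toNNReal (fun q => v N t q) := by
      refine LipschitzWith.of_dist_le_mul fun x y => ?_
      rw [Real.dist_eq, Real.dist_eq, hv N hN t x, hv N hN t y,
        Real.coe_toNNReal _ hL]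
      have hd := hliplog.dist_le_mul x y
      rw [Real.dist_eq, Real.dist_eq, Real.coe_toNNReal _ (by positivity)] at hd
      have hab : σ ^ 2 / B N * a = 1 := by
        rw [ha_def, div_mul_div_comm, mul_comm (σ ^ 2), div_self (by positivity)]
      calc |σ ^ 2 / B N *
            Real.log (∫ z, Real.exp (a * H (x + c * z)) ∂(gaussianReal 0 1)) -
          σ ^ 2 / B N *
            Real.log (∫ z, Real.exp (a * H (y + c * z)) ∂(gaussianReal 0 1))|
          = (σ ^ 2 / B N) *
            |Real.log (∫ z, Real.exp (a * H (x + c * z)) ∂(gaussianReal 0 1)) -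
             Real.log (∫ z, Real.exp (a * H (y + c * z)) ∂(gaussianReal 0 1))| := by
            rw [← mul_sub, abs_mul, abs_of_nonneg (by positivity)]
        _ ≤ (σ ^ 2 / B N) * (a * L * |x - y|) := by
            apply mul_le_mul_of_nonneg_left hd (by positivity)
        _ = L * |x - y| := by
            rw [show σ ^ 2 / B N * (a * L * |x - y|)
              = (σ ^ 2 / B N * a) * (L * |x - y|) by ring, hab, one_mul]
    -- derivative bound
    have hderiv : |deriv (fun q => v N t q) p| ≤ L := by
      have hf := norm_fderiv_le_of_lipschitz ℝ (x₀ := p) hvlip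
      rw [Real.coe_toNNReal _ hL] at hf
      have h1 : deriv (fun q => v N t q) p = fderiv ℝ (fun q => v N t q) p 1 := by
        rw [← fderiv_apply_one_eq_deriv]
      rw [h1, ← Real.norm_eq_abs]
      calc ‖fderiv ℝ (fun q => v N t q) p 1‖
          ≤ ‖fderiv ℝ (fun q => v N t q) p‖ * ‖(1:ℝ)‖ :=
            (fderiv ℝ (fun q => v N t q) p).le_opNorm 1
        _ ≤ L := by rw [norm_one, mul_one]; exact hf
    rw [hX N t p, abs_mul, abs_of_nonneg (by positivity : (0:ℝ) ≤ lam / (κ * ((N:ℝ) + 1)))]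
    have hq : (0:ℝ) < κ * ((N:ℝ) + 1) := by positivity
    rw [div_mul_eq_mul_div]
    exact div_le_div_of_nonneg_right (mul_le_mul_of_nonneg_left hderiv hlam.le) hq.le |>.trans_eq rfl
  refine ⟨fun N hN t _ p => main N hN t p, fun ε hε => ?_⟩
  obtain ⟨n, hn⟩ := exists_nat_ge (lam * L / (κ * ε))
  refine ⟨max 1 n, le_max_left _ _, fun N hN t _ p => ?_⟩
  have hN1 : 1 ≤ N := le_trans (le_max_left 1 n) hN
  refine (main N hN1 t p).trans ?_
  have hnN : (n : ℝ) ≤ (N : ℝ) := by exact_mod_cast le_trans (le_max_right 1 n) hN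
  have hpos : (0:ℝ) < κ * ((N:ℝ) + 1) := by positivity
  rw [div_le_iff₀ hpos]
  have h2 : lam * L / (κ * ε) ≤ (N:ℝ) + 1 := by linarith
  have h3 : lam * L ≤ ((N:ℝ) + 1) * (κ * ε) := by
    rw [div_le_iff₀ (by positivity)] at h2
    linarith
  linarith
end

section
/- Let σ, λ, κ, T > 0 and let H: ℝ → ℝ be continuously differentiable, convex, nondecreasing and Lipschitz continuous with constant L. For each integer N ≥ 1 set B_N := 2λ²N/(κ(N+1)²), define v^{(N)}(t, p) = (σ²/B_N) · log ∫_ℝ exp( (B_N/σ²) · H( p + σ√(T − t) z ) ) dγ(z) on [0,T) × ℝ with γ the standard Gaussian measure, and define the aggregate equilibrium trading speed Ẋ*_N(t, p) := (λ/(κ(N+1))) · ∂_p v^{(N)}(t, p). Then for every fixed (t, p) ∈ (0, T) × ℝ: Ẋ*_N(t, p) ≥ 0, the sequence N ↦ Ẋ*_N(t, p) is nonincreasing in N, and Ẋ*_N(t, p) → 0 as N → ∞. -/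
open MeasureTheory ProbabilityTheory Real

lemma aux_int_exp (a : ℝ) : Integrable (fun z => Real.exp (a * z)) (gaussianReal 0 1) := by
  rw [gaussianReal_of_var_ne_zero 0 one_ne_zero,
    integrable_withDensity_iff (measurable_gaussianPDF 0 1)
      (Filter.Eventually.of_forall fun x => ENNReal.ofReal_lt_top)]
  have hbase : Integrable (fun x : ℝ => Real.exp (-(1/2) * (x - a)^2)) :=
    (integrable_exp_neg_mul_sq (by norm_num)).comp_sub_right a
  have h2 : Integrable (fun x : ℝ =>
      (Real.sqrt (2*Real.pi))⁻¹ * (Real.exp (a^2/2) * Real.exp (-(1/2) * (x - a)^2))) :=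
    (hbase.const_mul _).const_mul _
  refine h2.congr (Filter.Eventually.of_forall fun x => ?_)
  simp only [gaussianPDF_def, gaussianPDFReal_def]
  rw [ENNReal.toReal_ofReal (by positivity), ← Real.exp_add,
    mul_comm (Real.exp (a * x)) _, mul_assoc, ← Real.exp_add]
  norm_num
  ring_nf
  exact Or.inl trivial

lemma aux_int_exp_abs (a : ℝ) :
    Integrable (fun z => Real.exp (a * |z|)) (gaussianReal 0 1) := by
  refine ((aux_int_exp a).add (aux_int_exp (-a))).mono'
    ((Real.continuous_exp.comp (continuous_const.mul continuous_abs)).aestronglyMeasurable)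
    (Filter.Eventually.of_forall fun z => ?_)
  rw [Real.norm_eq_abs, abs_of_pos (Real.exp_pos _)]
  rcases le_total 0 z with hz | hz
  · rw [abs_of_nonneg hz]
    exact le_add_of_nonneg_right (Real.exp_pos _).le
  · rw [abs_of_nonpos hz]
    calc Real.exp (a * -z) = Real.exp (-a * z) := by ring_nf
    _ ≤ _ := le_add_of_nonneg_left (Real.exp_pos _).le

/-- Chebyshev / FKG correlation inequality for exponential tilting. -/
lemma aux_cheb {μ : Measure ℝ} [IsProbabilityMeasure μ] {g h : ℝ → ℝ}
    (hg : Monotone g) (hh : Monotone h) {b1 b2 : ℝ} (hb : b1 ≤ b2)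
    (hI1 : Integrable (fun z => Real.exp (b1 * h z)) μ)
    (hI2 : Integrable (fun z => Real.exp (b2 * h z)) μ)
    (hJ1 : Integrable (fun z => g z * Real.exp (b1 * h z)) μ)
    (hJ2 : Integrable (fun z => g z * Real.exp (b2 * h z)) μ) :
    (∫ z, g z * Real.exp (b1 * h z) ∂μ) * ∫ z, Real.exp (b2 * h z) ∂μ ≤
      (∫ z, g z * Real.exp (b2 * h z) ∂μ) * ∫ z, Real.exp (b1 * h z) ∂μ := by
  have key : 0 ≤ ∫ zw : ℝ × ℝ, (g zw.1 - g zw.2) *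
      (Real.exp (b2 * h zw.1) * Real.exp (b1 * h zw.2)
        - Real.exp (b1 * h zw.1) * Real.exp (b2 * h zw.2)) ∂(μ.prod μ) := by
    refine integral_nonneg fun zw => ?_
    simp only [Pi.zero_apply]
    rcases le_total zw.2 zw.1 with hzw | hzw
    · refine mul_nonneg (sub_nonneg.2 (hg hzw)) (sub_nonneg.2 ?_)
      rw [← Real.exp_add, ← Real.exp_add]
      refine Real.exp_le_exp.2 ?_
      nlinarith [hh hzw, sub_nonneg.2 hb]
    · have h1 : g zw.1 - g zw.2 ≤ 0 := sub_nonpos.2 (hg hzw)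
      have h2 : Real.exp (b2 * h zw.1) * Real.exp (b1 * h zw.2)
          - Real.exp (b1 * h zw.1) * Real.exp (b2 * h zw.2) ≤ 0 := by
        rw [← Real.exp_add, ← Real.exp_add]
        refine sub_nonpos.2 (Real.exp_le_exp.2 ?_)
        nlinarith [hh hzw, sub_nonneg.2 hb]
      nlinarith
  have hA : Integrable (fun zw : ℝ × ℝ =>
      (g zw.1 * Real.exp (b2 * h zw.1)) * Real.exp (b1 * h zw.2)) (μ.prod μ) := hJ2.mul_prod hI1
  have hBi : Integrable (fun zw : ℝ × ℝ =>
      (g zw.1 * Real.exp (b1 * h zw.1)) * Real.exp (b2 * h zw.2)) (μ.prod μ) := hJ1.mul_prod hI2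
  have hCi : Integrable (fun zw : ℝ × ℝ =>
      Real.exp (b2 * h zw.1) * (g zw.2 * Real.exp (b1 * h zw.2))) (μ.prod μ) := hI2.mul_prod hJ1
  have hDi : Integrable (fun zw : ℝ × ℝ =>
      Real.exp (b1 * h zw.1) * (g zw.2 * Real.exp (b2 * h zw.2))) (μ.prod μ) := hI1.mul_prod hJ2
  have hfun : (fun zw : ℝ × ℝ => (g zw.1 - g zw.2) *
      (Real.exp (b2 * h zw.1) * Real.exp (b1 * h zw.2)
        - Real.exp (b1 * h zw.1) * Real.exp (b2 * h zw.2))) =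
      fun zw : ℝ × ℝ =>
        ((g zw.1 * Real.exp (b2 * h zw.1)) * Real.exp (b1 * h zw.2)
          - (g zw.1 * Real.exp (b1 * h zw.1)) * Real.exp (b2 * h zw.2))
        - (Real.exp (b2 * h zw.1) * (g zw.2 * Real.exp (b1 * h zw.2))
          - Real.exp (b1 * h zw.1) * (g zw.2 * Real.exp (b2 * h zw.2))) := by
    funext zw; ring
  have hAB : Integrable (fun zw : ℝ × ℝ =>
      (g zw.1 * Real.exp (b2 * h zw.1)) * Real.exp (b1 * h zw.2)
        - (g zw.1 * Real.exp (b1 * h zw.1)) * Real.exp (b2 * h zw.2)) (μ.prod μ) := hA.sub hBi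
  have hCD : Integrable (fun zw : ℝ × ℝ =>
      Real.exp (b2 * h zw.1) * (g zw.2 * Real.exp (b1 * h zw.2))
        - Real.exp (b1 * h zw.1) * (g zw.2 * Real.exp (b2 * h zw.2))) (μ.prod μ) := hCi.sub hDi
  rw [hfun, integral_sub hAB hCD, integral_sub hA hBi, integral_sub hCi hDi,
    integral_prod_mul (fun z => g z * Real.exp (b2 * h z)) (fun z => Real.exp (b1 * h z)),
    integral_prod_mul (fun z => g z * Real.exp (b1 * h z)) (fun z => Real.exp (b2 * h z)),
    integral_prod_mul (fun z => Real.exp (b2 * h z)) (fun z => g z * Real.exp (b1 * h z)),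
    integral_prod_mul (fun z => Real.exp (b1 * h z)) (fun z => g z * Real.exp (b2 * h z))] at key
  nlinarith [key]

/-- Splitting the option among more agents reduces aggregate manipulation: for
a convex, nondecreasing, `L`-Lipschitz `C¹` payoff `H`, the aggregate
equilibrium trading speed `Ẋ*_N(t,p) = (λ/(κ(N+1))) ∂ₚ v⁽ᴺ⁾(t,p)` built from
the Cole–Hopf solution `v⁽ᴺ⁾` (with `B_N = 2λ²N/(κ(N+1)²)`) is nonnegative,
nonincreasing in `N`, and tends to `0` as `N → ∞`, at every fixed
`(t,p) ∈ (0,T) × ℝ`. -/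
theorem stmt_17 (σ lam κ T L : ℝ) (hσ : 0 < σ) (hlam : 0 < lam) (hκ : 0 < κ)
    (hT : 0 < T) (hL : 0 ≤ L)
    (H : ℝ → ℝ) (hH : ContDiff ℝ 1 H) (hconv : ConvexOn ℝ Set.univ H)
    (hmono : Monotone H) (hHL : LipschitzWith L.toNNReal H)
    (B : ℕ → ℝ) (hB : ∀ N : ℕ, B N = 2 * lam ^ 2 * N / (κ * ((N : ℝ) + 1) ^ 2))
    (v : ℕ → ℝ → ℝ → ℝ)
    (hv : ∀ N : ℕ, 1 ≤ N → ∀ t p : ℝ, v N t p =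
      (σ ^ 2 / B N) * Real.log
        (∫ z, Real.exp ((B N / σ ^ 2) * H (p + σ * Real.sqrt (T - t) * z))
          ∂(gaussianReal 0 1)))
    (Xdot : ℕ → ℝ → ℝ → ℝ)
    (hX : ∀ (N : ℕ) (t p : ℝ),
      Xdot N t p = (lam / (κ * ((N : ℝ) + 1))) * deriv (fun q => v N t q) p)
    (t p : ℝ) (ht : t ∈ Set.Ioo (0 : ℝ) T) :
    (∀ N : ℕ, 1 ≤ N → 0 ≤ Xdot N t p) ∧
    (∀ N M : ℕ, 1 ≤ N → N ≤ M → Xdot M t p ≤ Xdot N t p) ∧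
    Filter.Tendsto (fun N : ℕ => Xdot N t p) Filter.atTop (nhds 0) := by
  obtain ⟨ht0, htT⟩ := ht
  have hTt : 0 < T - t := by linarith
  set c := σ * Real.sqrt (T - t) with hc_def
  have hc : 0 < c := mul_pos hσ (Real.sqrt_pos.2 hTt)
  have hσ2 : (0:ℝ) < σ ^ 2 := by positivity
  have hHdiff : Differentiable ℝ H := hH.differentiable one_ne_zero
  have hHcont : Continuous H := hHdiff.continuous
  have hH'cont : Continuous (deriv H) := hH.continuous_deriv le_rfl
  have hH'le : ∀ x, |deriv H x| ≤ L := by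
    intro x
    have h := (hHdiff x).hasDerivAt.le_of_lipschitz hHL
    rwa [Real.norm_eq_abs, Real.coe_toNNReal L hL] at h
  have hH'0 : ∀ x, 0 ≤ deriv H x := by
    intro x
    have h := (hHdiff x).hasDerivAt
    rw [hasDerivAt_iff_tendsto_slope] at h
    have h2 : Filter.Tendsto (slope H x) (nhdsWithin x (Set.Ioi x)) (nhds (deriv H x)) :=
      h.mono_left (nhdsWithin_mono x fun y hy => ne_of_gt hy)
    refine ge_of_tendsto h2 ?_
    filter_upwards [self_mem_nhdsWithin] with y hy
    rw [slope_def_field]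
    exact div_nonneg (sub_nonneg.2 (hmono (le_of_lt hy))) (sub_nonneg.2 (le_of_lt hy))
  have hH'mono : Monotone (deriv H) :=
    monotoneOn_univ.1 (hconv.monotoneOn_deriv fun x _ => hHdiff x)
  have hHbd : ∀ x y : ℝ, H x ≤ H y + L * |x - y| := by
    intro x y
    have h := hHL.dist_le_mul x y
    rw [Real.dist_eq, Real.dist_eq, Real.coe_toNNReal L hL] at h
    linarith [(abs_le.1 h).2]
  have hBpos : ∀ N : ℕ, 1 ≤ N → 0 < B N := by
    intro N hN
    have hN' : (0:ℝ) < N := by exact_mod_cast hN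
    rw [hB]; positivity
  have hbanti : ∀ N M : ℕ, 1 ≤ N → N ≤ M → B M / σ ^ 2 ≤ B N / σ ^ 2 := by
    intro N M hN hNM
    have h1 : (1:ℝ) ≤ (N:ℝ) := by exact_mod_cast hN
    have h2 : (N:ℝ) ≤ (M:ℝ) := by exact_mod_cast hNM
    have hBle : B M ≤ B N := by
      rw [hB, hB, div_le_div_iff₀ (by positivity) (by positivity)]
      have hNM1 : (1:ℝ) ≤ (N:ℝ) * (M:ℝ) := by nlinarith
      have hkey : (M:ℝ) * ((N:ℝ)+1)^2 ≤ (N:ℝ) * ((M:ℝ)+1)^2 := by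
        nlinarith [mul_nonneg (sub_nonneg.2 h2) (sub_nonneg.2 hNM1)]
      nlinarith [mul_le_mul_of_nonneg_left hkey
        (by positivity : (0:ℝ) ≤ 2 * lam ^ 2 * κ)]
    gcongr
  -- integrability facts
  have key_int : ∀ b : ℝ, 0 ≤ b → ∀ q : ℝ,
      Integrable (fun z => Real.exp (b * H (q + c * z))) (gaussianReal 0 1) := by
    intro b hb q
    refine ((aux_int_exp_abs (b * L * c)).const_mul (Real.exp (b * H q))).mono'
      ((Real.continuous_exp.comp (continuous_const.mul (hHcont.comp
        (continuous_const.add (continuous_const.mul continuous_id))))).aestronglyMeasurable)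
      (Filter.Eventually.of_forall fun z => ?_)
    rw [Real.norm_eq_abs, abs_of_pos (Real.exp_pos _), ← Real.exp_add]
    refine Real.exp_le_exp.2 ?_
    have h3 : H (q + c * z) ≤ H q + L * (c * |z|) := by
      calc H (q + c * z) ≤ H q + L * |q + c * z - q| := hHbd _ _
      _ = H q + L * (c * |z|) := by
          rw [show q + c * z - q = c * z by ring, abs_mul, abs_of_pos hc]
    nlinarith [mul_le_mul_of_nonneg_left h3 hb]
  have key_int' : ∀ b : ℝ, 0 ≤ b → ∀ q : ℝ,
      Integrable (fun z => deriv H (q + c * z) * Real.exp (b * H (q + c * z)))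
        (gaussianReal 0 1) := by
    intro b hb q
    refine ((key_int b hb q).const_mul L).mono'
      (((hH'cont.comp (continuous_const.add (continuous_const.mul continuous_id))).mul
        (Real.continuous_exp.comp (continuous_const.mul (hHcont.comp
          (continuous_const.add (continuous_const.mul continuous_id)))))).aestronglyMeasurable)
      (Filter.Eventually.of_forall fun z => ?_)
    rw [Real.norm_eq_abs, abs_mul, abs_of_pos (Real.exp_pos _)]
    exact mul_le_mul_of_nonneg_right (hH'le _) (Real.exp_pos _).le
  have hIpos : ∀ b : ℝ, 0 ≤ b → ∀ q : ℝ,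
      0 < ∫ z, Real.exp (b * H (q + c * z)) ∂(gaussianReal 0 1) :=
    fun b hb q => integral_exp_pos (key_int b hb q)
  have hJnn : ∀ b : ℝ,
      0 ≤ ∫ z, deriv H (p + c * z) * Real.exp (b * H (p + c * z)) ∂(gaussianReal 0 1) :=
    fun b => integral_nonneg fun z => mul_nonneg (hH'0 _) (Real.exp_pos _).le
  -- derivative of the inner integral
  have hIderiv : ∀ b : ℝ, 0 ≤ b →
      HasDerivAt (fun q => ∫ z, Real.exp (b * H (q + c * z)) ∂(gaussianReal 0 1))
        (∫ z, b * deriv H (p + c * z) * Real.exp (b * H (p + c * z)) ∂(gaussianReal 0 1))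
        p := by
    intro b hb
    have hasD : ∀ q z : ℝ, HasDerivAt (fun q => Real.exp (b * H (q + c * z)))
        (Real.exp (b * H (q + c * z)) * (b * deriv H (q + c * z))) q := by
      intro q z
      have h0 : HasDerivAt (fun q : ℝ => q + c * z) 1 q := (hasDerivAt_id q).add_const (c * z)
      have h1 := (hHdiff (q + c * z)).hasDerivAt.comp q h0
      have h2 : HasDerivAt (fun q : ℝ => b * H (q + c * z))
          (b * deriv H (q + c * z)) q := by
        simpa [mul_comm] using h1.const_mul b
      exact h2.exp
    refine (hasDerivAt_integral_of_dominated_loc_of_lip (μ := gaussianReal 0 1)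
      (F := fun (q : ℝ) (z : ℝ) => Real.exp (b * H (q + c * z)))
      (F' := fun z => b * deriv H (p + c * z) * Real.exp (b * H (p + c * z)))
      (x₀ := p)
      (bound := fun z => b * L * Real.exp (b * L) * Real.exp (b * H (p + c * z)))
      (s := Metric.ball p 1) (Metric.ball_mem_nhds p one_pos) ?_ ?_ ?_ ?_ ?_ ?_).2
    · exact Filter.Eventually.of_forall fun q =>
        (Real.continuous_exp.comp (continuous_const.mul (hHcont.comp
          (continuous_const.add (continuous_const.mul continuous_id))))).aestronglyMeasurable
    · exact key_int b hb p
    · exact (((continuous_const.mul (hH'cont.comp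
          (continuous_const.add (continuous_const.mul continuous_id)))).mul
        (Real.continuous_exp.comp (continuous_const.mul (hHcont.comp
          (continuous_const.add (continuous_const.mul continuous_id)))))).aestronglyMeasurable)
    · refine Filter.Eventually.of_forall fun z => ?_
      refine (convex_ball p 1).lipschitzOnWith_of_nnnorm_hasDerivWithin_le
        (f' := fun q => Real.exp (b * H (q + c * z)) * (b * deriv H (q + c * z)))
        (fun q _ => (hasD q z).hasDerivWithinAt) ?_
      intro q hq
      rw [← NNReal.coe_le_coe, coe_nnnorm, Real.coe_nnabs, Real.norm_eq_abs]
      have hball : |q - p| < 1 := by rwa [Metric.mem_ball, Real.dist_eq] at hq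
      have hHq : H (q + c * z) ≤ H (p + c * z) + L := by
        have h4 : H (q + c * z) ≤ H (p + c * z) + L * |q + c * z - (p + c * z)| := hHbd _ _
        have h5 : |q + c * z - (p + c * z)| = |q - p| := by rw [show q + c * z - (p + c * z) = q - p by ring]
        nlinarith [mul_le_mul_of_nonneg_left hball.le hL]
      have e1 : Real.exp (b * H (q + c * z)) ≤
          Real.exp (b * H (p + c * z)) * Real.exp (b * L) := by
        rw [← Real.exp_add]
        exact Real.exp_le_exp.2 (by nlinarith [mul_le_mul_of_nonneg_left hHq hb])
      have e2 : |b * deriv H (q + c * z)| ≤ b * L := by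
        rw [abs_mul, abs_of_nonneg hb]
        exact mul_le_mul_of_nonneg_left (hH'le _) hb
      calc |Real.exp (b * H (q + c * z)) * (b * deriv H (q + c * z))|
          = Real.exp (b * H (q + c * z)) * |b * deriv H (q + c * z)| := by
            rw [abs_mul, abs_of_pos (Real.exp_pos _)]
        _ ≤ (Real.exp (b * H (p + c * z)) * Real.exp (b * L)) * (b * L) :=
            mul_le_mul e1 e2 (abs_nonneg _) (by positivity)
        _ = |b * L * Real.exp (b * L) * Real.exp (b * H (p + c * z))| := by
            rw [abs_of_nonneg (by positivity)]; ring
    · exact (key_int b hb p).const_mul _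
    · refine Filter.Eventually.of_forall fun z => ?_
      have h6 := hasD p z
      have h7 : HasDerivAt (fun q => Real.exp (b * H (q + c * z)))
          (b * deriv H (p + c * z) * Real.exp (b * H (p + c * z))) p := by
        convert h6 using 1
        ring
      exact h7
  -- the derivative of v in p
  have hvd : ∀ N : ℕ, 1 ≤ N → deriv (fun q => v N t q) p =
      (∫ z, deriv H (p + c * z) *
          Real.exp ((B N / σ ^ 2) * H (p + c * z)) ∂(gaussianReal 0 1)) /
        ∫ z, Real.exp ((B N / σ ^ 2) * H (p + c * z)) ∂(gaussianReal 0 1) := by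
    intro N hN
    have hbpos : 0 < B N / σ ^ 2 := div_pos (hBpos N hN) hσ2
    have hne := (hIpos _ hbpos.le p).ne'
    have hlog := HasDerivAt.const_mul (σ ^ 2 / B N)
      ((hIderiv (B N / σ ^ 2) hbpos.le).log hne)
    have harr : (fun q => v N t q) = fun q => (σ ^ 2 / B N) * Real.log
        (∫ z, Real.exp ((B N / σ ^ 2) * H (q + c * z)) ∂(gaussianReal 0 1)) := by
      funext q; rw [hv N hN t q]
    rw [harr, hlog.deriv]
    have hI' : (∫ z, (B N / σ ^ 2) * deriv H (p + c * z) *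
        Real.exp ((B N / σ ^ 2) * H (p + c * z)) ∂(gaussianReal 0 1)) =
        (B N / σ ^ 2) * ∫ z, deriv H (p + c * z) *
          Real.exp ((B N / σ ^ 2) * H (p + c * z)) ∂(gaussianReal 0 1) := by
      simp_rw [mul_assoc]
      exact integral_const_mul _ _
    rw [hI']
    have hBne := (hBpos N hN).ne'
    have halg : ∀ Jv Iv : ℝ, σ ^ 2 / B N * ((B N / σ ^ 2) * Jv / Iv) = Jv / Iv := by
      intro Jv Iv
      have h1 : σ ^ 2 / B N * (B N / σ ^ 2) = 1 := by field_simp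
      calc σ ^ 2 / B N * ((B N / σ ^ 2) * Jv / Iv)
          = (σ ^ 2 / B N * (B N / σ ^ 2)) * (Jv / Iv) := by ring
        _ = Jv / Iv := by rw [h1, one_mul]
    exact halg _ _
  -- nonnegativity
  have hpos : ∀ N : ℕ, 1 ≤ N → 0 ≤ Xdot N t p := by
    intro N hN
    have hbpos : 0 < B N / σ ^ 2 := div_pos (hBpos N hN) hσ2
    rw [hX, hvd N hN]
    exact mul_nonneg (by positivity)
      (div_nonneg (hJnn _) (hIpos _ hbpos.le p).le)
  -- upper bound
  have hub : ∀ N : ℕ, 1 ≤ N → Xdot N t p ≤ lam * L / (κ * ((N:ℝ) + 1)) := by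
    intro N hN
    have hbpos : 0 < B N / σ ^ 2 := div_pos (hBpos N hN) hσ2
    rw [hX, hvd N hN]
    have hratio : (∫ z, deriv H (p + c * z) *
        Real.exp ((B N / σ ^ 2) * H (p + c * z)) ∂(gaussianReal 0 1)) /
        (∫ z, Real.exp ((B N / σ ^ 2) * H (p + c * z)) ∂(gaussianReal 0 1)) ≤ L := by
      rw [div_le_iff₀ (hIpos _ hbpos.le p)]
      calc (∫ z, deriv H (p + c * z) *
          Real.exp ((B N / σ ^ 2) * H (p + c * z)) ∂(gaussianReal 0 1))
          ≤ ∫ z, L * Real.exp ((B N / σ ^ 2) * H (p + c * z)) ∂(gaussianReal 0 1) := by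
            refine integral_mono (key_int' _ hbpos.le p) ((key_int _ hbpos.le p).const_mul L)
              fun z => ?_
            exact mul_le_mul_of_nonneg_right ((le_abs_self _).trans (hH'le _))
              (Real.exp_pos _).le
        _ = L * ∫ z, Real.exp ((B N / σ ^ 2) * H (p + c * z)) ∂(gaussianReal 0 1) :=
            integral_const_mul _ _
    calc (lam / (κ * ((N:ℝ) + 1))) * ((∫ z, deriv H (p + c * z) *
          Real.exp ((B N / σ ^ 2) * H (p + c * z)) ∂(gaussianReal 0 1)) /
          (∫ z, Real.exp ((B N / σ ^ 2) * H (p + c * z)) ∂(gaussianReal 0 1)))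
        ≤ (lam / (κ * ((N:ℝ) + 1))) * L := by
          refine mul_le_mul_of_nonneg_left hratio (by positivity)
      _ = lam * L / (κ * ((N:ℝ) + 1)) := by ring
  refine ⟨hpos, ?_, ?_⟩
  · -- monotonicity in N
    intro N M hN hNM
    have hM := hN.trans hNM
    rw [hX, hX, hvd N hN, hvd M hM]
    have hbN : 0 < B N / σ ^ 2 := div_pos (hBpos N hN) hσ2
    have hbM : 0 < B M / σ ^ 2 := div_pos (hBpos M hM) hσ2
    have hmz : Monotone fun z : ℝ => p + c * z := fun a b' hab => by
      show p + c * a ≤ p + c * b'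
      nlinarith [mul_le_mul_of_nonneg_left hab hc.le]
    have hcheb := aux_cheb (g := fun z => deriv H (p + c * z)) (h := fun z => H (p + c * z))
      (fun a b' hab => hH'mono (hmz hab)) (fun a b' hab => hmono (hmz hab))
      (hbanti N M hN hNM)
      (key_int _ hbM.le p) (key_int _ hbN.le p) (key_int' _ hbM.le p) (key_int' _ hbN.le p)
    have h1 : (∫ z, deriv H (p + c * z) *
        Real.exp ((B M / σ ^ 2) * H (p + c * z)) ∂(gaussianReal 0 1)) /
        (∫ z, Real.exp ((B M / σ ^ 2) * H (p + c * z)) ∂(gaussianReal 0 1)) ≤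
        (∫ z, deriv H (p + c * z) *
        Real.exp ((B N / σ ^ 2) * H (p + c * z)) ∂(gaussianReal 0 1)) /
        (∫ z, Real.exp ((B N / σ ^ 2) * H (p + c * z)) ∂(gaussianReal 0 1)) := by
      rw [div_le_div_iff₀ (hIpos _ hbM.le p) (hIpos _ hbN.le p)]
      exact hcheb
    have h2 : lam / (κ * ((M:ℝ) + 1)) ≤ lam / (κ * ((N:ℝ) + 1)) := by
      have h2' : (N:ℝ) ≤ (M:ℝ) := by exact_mod_cast hNM
      gcongr
    refine mul_le_mul h2 h1 (div_nonneg (hJnn _) (hIpos _ hbM.le p).le) (by positivity)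
  · -- limit
    have htend : Filter.Tendsto (fun N : ℕ => lam * L / (κ * ((N:ℝ) + 1)))
        Filter.atTop (nhds 0) := by
      have heq : (fun N : ℕ => lam * L / (κ * ((N:ℝ) + 1))) =
          fun N : ℕ => (lam * L / κ) * (1 / ((N:ℝ) + 1)) := by
        funext N
        field_simp
      rw [heq]
      simpa using tendsto_one_div_add_atTop_nhds_zero_nat.const_mul (lam * L / κ)
    refine tendsto_of_tendsto_of_tendsto_of_le_of_le' tendsto_const_nhds htend ?_ ?_
    · exact Filter.eventually_atTop.2 ⟨1, fun N hN => hpos N hN⟩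
    · exact Filter.eventually_atTop.2 ⟨1, fun N hN => hub N hN⟩
end

section
/- Let (Ω, 𝓕, (𝓕_t)_{t∈[0,T]}, ℙ) be a filtered probability space and let W = (W_t) be a square-integrable martingale with W_0 = 0. Let T, λ, κ, Θ > 0 and p₀, K ∈ ℝ. Let X: Ω × [0,T] → ℝ be adapted and pathwise absolutely continuous with X_0 = 0 and bounded derivative Ẋ, and let θ: Ω → [0, Θ] be 𝓕_T-measurable. Define P_t = p₀ + W_t + λ X_t and J(X, θ) = −∫₀ᵀ Ẋ_t (P_t + κ Ẋ_t) dt + (X_T + θ)( P_T − (1/2)λ(X_T + θ) ) − θ K. Then 𝔼[J(X, θ)] = −κ 𝔼[∫₀ᵀ Ẋ_t² dt] + 𝔼[ θ( p₀ + W_T − (1/2)λθ − K ) ], and consequently 𝔼[J(X, θ)] ≤ 𝔼[ max_{ϑ ∈ [0, Θ]} ϑ( p₀ + W_T − (1/2)λϑ − K ) ], with equality attained by taking Ẋ ≡ 0 and θ the pointwise maximizer. In particular the optimal trading strategy in the underlying is X ≡ 0: call options with physical delivery induce no stock price manipulation. -/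
open MeasureTheory Set Filter Function
open scoped Topology ENNReal

lemma aux_integrable_of_bounded {α : Type*} {mα : MeasurableSpace α} {μ : Measure α}
    [IsFiniteMeasure μ] {f : α → ℝ} (hf : AEStronglyMeasurable f μ) {C : ℝ}
    (hC : ∀ x, |f x| ≤ C) : Integrable f μ :=
  (integrable_const C).mono' hf (Eventually.of_forall fun x => by
    simpa [Real.norm_eq_abs] using hC x)

lemma aux_finite (a b : ℝ) : IsFiniteMeasure (volume.restrict (Set.Ioc a b)) :=
  ⟨by rw [Measure.restrict_apply_univ]; exact measure_Ioc_lt_top⟩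

lemma aux_II {f : ℝ → ℝ} (hf : Measurable f) {C : ℝ} (hC : ∀ t, |f t| ≤ C) (a b : ℝ) :
    IntervalIntegrable f volume a b := by
  constructor
  · haveI := aux_finite a b
    exact aux_integrable_of_bounded hf.aestronglyMeasurable hC
  · haveI := aux_finite b a
    exact aux_integrable_of_bounded hf.aestronglyMeasurable hC

lemma aux_isGreatest {lam Θ : ℝ} (hlam : 0 < lam) (hΘ : 0 < Θ) (c : ℝ) :
    IsGreatest ((fun ϑ : ℝ => ϑ * (c - 1 / 2 * lam * ϑ)) '' Set.Icc 0 Θ)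
      ((max 0 (min Θ (c / lam))) * (c - 1 / 2 * lam * (max 0 (min Θ (c / lam))))) := by
  set mm := max 0 (min Θ (c / lam)) with hmm
  have hm0 : 0 ≤ mm := le_max_left _ _
  have hmΘ : mm ≤ Θ := max_le hΘ.le (min_le_left _ _)
  constructor
  · exact ⟨mm, ⟨hm0, hmΘ⟩, rfl⟩
  · rintro y ⟨ϑ, ⟨h0, h1⟩, rfl⟩
    rcases le_or_gt c 0 with hc | hc
    · have hmin : min Θ (c / lam) ≤ 0 :=
        le_trans (min_le_right _ _) (div_nonpos_iff.2 (Or.inr ⟨hc, hlam.le⟩))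
      have hmz : mm = 0 := by rw [hmm, max_eq_left hmin]
      rw [hmz]
      nlinarith [mul_nonpos_of_nonneg_of_nonpos h0 hc,
        mul_nonneg (mul_nonneg hlam.le h0) h0]
    · rcases le_or_gt (lam * Θ) c with hc2 | hc2
      · have hΘc : Θ ≤ c / lam := (le_div_iff₀ hlam).2 (by linarith)
        have hmz : mm = Θ := by rw [hmm, min_eq_left hΘc, max_eq_right hΘ.le]
        rw [hmz]
        nlinarith [mul_nonneg (sub_nonneg.2 h1)
          (show (0:ℝ) ≤ c - 1 / 2 * lam * Θ - 1 / 2 * lam * ϑ by nlinarith)]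
      · have h3 : c / lam ≤ Θ := (div_le_iff₀ hlam).2 (by linarith)
        have h4 : 0 ≤ c / lam := div_nonneg hc.le hlam.le
        have hmz : mm = c / lam := by rw [hmm, min_eq_right h3, max_eq_right h4]
        rw [hmz]
        have hc' : c = lam * (c / lam) := by field_simp
        set d := c / lam with hd
        rw [hc']
        nlinarith [mul_nonneg hlam.le (sq_nonneg (d - ϑ))]

lemma aux_selfconv {f : ℝ → ℝ} (hf : Measurable f) {C : ℝ} (hC : ∀ t, |f t| ≤ C)
    {T : ℝ} (hT : 0 ≤ T) :
    ∫ t in Set.Ioc (0:ℝ) T, (∫ s in (0:ℝ)..t, f s) * f t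
      = (∫ s in (0:ℝ)..T, f s) ^ 2 / 2 := by
  haveI : IsFiniteMeasure (volume.restrict (Set.Ioc (0:ℝ) T)) := aux_finite 0 T
  set ν : Measure ℝ := volume.restrict (Set.Ioc (0:ℝ) T) with hν
  have hC0 : 0 ≤ C := le_trans (abs_nonneg _) (hC 0)
  set F : ℝ → ℝ → ℝ := fun s t => if s ≤ t then f s * f t else 0 with hF
  have hFmeas : Measurable (uncurry F) := by
    apply Measurable.ite (measurableSet_le measurable_fst measurable_snd)
    · exact (hf.comp measurable_fst).mul (hf.comp measurable_snd)
    · exact measurable_const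
  have hFbd : ∀ p : ℝ × ℝ, |uncurry F p| ≤ C * C := by
    rintro ⟨s, t⟩
    simp only [uncurry, hF]
    split_ifs
    · exact (abs_mul _ _).le.trans (mul_le_mul (hC s) (hC t) (abs_nonneg _) hC0)
    · simpa using mul_nonneg hC0 hC0
  have hFint : Integrable (uncurry F) (ν.prod ν) :=
    aux_integrable_of_bounded hFmeas.aestronglyMeasurable hFbd
  have hFswapmeas : Measurable (uncurry fun t s => F s t) := by
    have : (uncurry fun t s => F s t) = uncurry F ∘ Prod.swap := rfl
    rw [this]; exact hFmeas.comp measurable_swap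
  have hFswapint : Integrable (uncurry fun t s => F s t) (ν.prod ν) :=
    aux_integrable_of_bounded hFswapmeas.aestronglyMeasurable (fun p => hFbd p.swap)
  have hsec1 : ∀ t : ℝ, Integrable (fun s => F s t) ν := fun t =>
    aux_integrable_of_bounded
      ((hFmeas.comp (measurable_id.prodMk measurable_const)).aestronglyMeasurable)
      (fun s => hFbd (s, t))
  have hsec2 : ∀ t : ℝ, Integrable (fun s => F t s) ν := fun t =>
    aux_integrable_of_bounded
      ((hFmeas.comp (measurable_const.prodMk measurable_id)).aestronglyMeasurable)
      (fun s => hFbd (t, s))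
  have hfint : Integrable f ν := aux_integrable_of_bounded hf.aestronglyMeasurable hC
  -- inner identity
  have hinner : ∀ t ∈ Set.Ioc (0:ℝ) T,
      (∫ s in (0:ℝ)..t, f s) * f t = ∫ s, F s t ∂ν := by
    intro t ht
    have h2 : ∫ s, (Set.Iic t).indicator f s ∂ν = ∫ s in Set.Ioc (0:ℝ) t, f s := by
      rw [hν, setIntegral_indicator measurableSet_Iic, Set.Ioc_inter_Iic,
        min_eq_right ht.2]
    calc (∫ s in (0:ℝ)..t, f s) * f t
        = (∫ s, (Set.Iic t).indicator f s ∂ν) * f t := by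
          rw [intervalIntegral.integral_of_le ht.1.le, ← h2]
      _ = ∫ s, (Set.Iic t).indicator f s * f t ∂ν := (integral_mul_const _ _).symm
      _ = ∫ s, F s t ∂ν := by
          refine integral_congr_ae (Eventually.of_forall fun s => ?_)
          simp only [Set.indicator_apply, Set.mem_Iic, hF, ite_mul, zero_mul]
  have hLHS : ∫ t in Set.Ioc (0:ℝ) T, (∫ s in (0:ℝ)..t, f s) * f t
      = ∫ t, (∫ s, F s t ∂ν) ∂ν := setIntegral_congr_fun measurableSet_Ioc hinner
  have hswap : ∫ t, (∫ s, F s t ∂ν) ∂ν = ∫ s, (∫ t, F s t ∂ν) ∂ν :=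
    integral_integral_swap hFswapint
  have hint1 : Integrable (fun t => ∫ s, F s t ∂ν) ν := hFswapint.integral_prod_left
  have hint2 : Integrable (fun t => ∫ s, F t s ∂ν) ν := hFint.integral_prod_left
  have hdiag : ∀ t : ℝ, (∫ s, F s t ∂ν) + (∫ s, F t s ∂ν) = (∫ s, f s ∂ν) * f t := by
    intro t
    have hne : ∀ᵐ s ∂ν, s ≠ t := by
      refine ae_restrict_of_ae ?_
      have h0 : {s : ℝ | ¬ s ≠ t} = {t} := by ext s; simp
      rw [ae_iff, h0]
      exact Real.volume_singleton
    rw [← integral_add (hsec1 t) (hsec2 t)]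
    rw [show ∫ s, (F s t + F t s) ∂ν = ∫ s, f s * f t ∂ν from
      integral_congr_ae (hne.mono fun s hs => by
        simp only [hF]
        rcases le_total s t with h | h
        · rw [if_pos h, if_neg (fun h' => hs (le_antisymm h h')), add_zero]
        · rw [if_neg (fun h' => hs (le_antisymm h' h)), if_pos h, zero_add, mul_comm])]
    exact integral_mul_const _ _
  have h2I : (∫ t, (∫ s, F s t ∂ν) ∂ν) + (∫ t, (∫ s, F s t ∂ν) ∂ν)
      = (∫ s, f s ∂ν) * (∫ s, f s ∂ν) := by
    nth_rewrite 2 [hswap]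
    rw [← integral_add hint1 hint2]
    rw [show ∫ t, ((∫ s, F s t ∂ν) + (∫ s, F t s ∂ν)) ∂ν = ∫ t, (∫ s, f s ∂ν) * f t ∂ν from
      integral_congr_ae (Eventually.of_forall fun t => hdiag t)]
    exact integral_const_mul _ _
  have hfT : ∫ s, f s ∂ν = ∫ s in (0:ℝ)..T, f s := by
    rw [intervalIntegral.integral_of_le hT, hν]
  rw [hLHS]
  rw [hfT] at h2I
  nlinarith [h2I]

lemma aux_mart {Ω : Type*} {m : MeasurableSpace Ω} {μ : Measure Ω} [IsProbabilityMeasure μ]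
    {𝓕 : Filtration ℝ m} {W : ℝ → Ω → ℝ} (hW : Martingale W 𝓕 μ)
    {t T : ℝ} (ht : t ≤ T) {g : Ω → ℝ} (hg : StronglyMeasurable[𝓕 t] g)
    {C : ℝ} (hgb : ∀ ω, |g ω| ≤ C) :
    ∫ ω, g ω * W T ω ∂μ = ∫ ω, g ω * W t ω ∂μ := by
  have hWT : Integrable (W T) μ := hW.integrable T
  have hgm : AEStronglyMeasurable g μ := (hg.mono (𝓕.le t)).aestronglyMeasurable
  have hint : Integrable (g * W T) μ := by
    refine Integrable.mono' (hWT.abs.const_mul C) (hgm.mul hWT.aestronglyMeasurable) ?_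
    refine Eventually.of_forall fun ω => ?_
    simp only [Pi.mul_apply, Real.norm_eq_abs, abs_mul]
    exact mul_le_mul_of_nonneg_right (hgb ω) (abs_nonneg _)
  have h1 : μ[g * W T | 𝓕 t] =ᵐ[μ] g * μ[W T | 𝓕 t] :=
    condExp_mul_of_stronglyMeasurable_left hg hint hWT
  have h2 : μ[W T | 𝓕 t] =ᵐ[μ] W t := hW.condExp_ae_eq ht
  calc ∫ ω, g ω * W T ω ∂μ = ∫ ω, (μ[g * W T | 𝓕 t]) ω ∂μ :=
        (integral_condExp (𝓕.le t)).symm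
    _ = ∫ ω, g ω * W t ω ∂μ := by
        refine integral_congr_ae (h1.trans ?_)
        filter_upwards [h2] with ω h
        simp [h]


/-- Call options with physical delivery induce no stock price manipulation:
with `P_t = p₀ + W_t + λX_t` and payoff
`J = −∫₀ᵀ Ẋ(P + κẊ) dt + (X_T + θ)(P_T − ½λ(X_T + θ)) − θK`, one has
`𝔼[J] = −κ𝔼[∫₀ᵀ Ẋ² dt] + 𝔼[θ(p₀ + W_T − ½λθ − K)]`, hence
`𝔼[J] ≤ 𝔼[sup_{ϑ ∈ [0,Θ]} ϑ(p₀ + W_T − ½λϑ − K)]`, with equality attained by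
the zero trading strategy together with a pointwise maximizer `θ'`. -/
theorem stmt_19 {Ω : Type*} {m : MeasurableSpace Ω} (μ : Measure Ω)
    [IsProbabilityMeasure μ]
    (𝓕 : Filtration ℝ m) (W : ℝ → Ω → ℝ)
    (hW : Martingale W 𝓕 μ) (hW2 : ∀ t : ℝ, MemLp (W t) 2 μ)
    (hW0 : ∀ ω, W 0 ω = 0) (hWpath : ∀ ω, Continuous fun t => W t ω)
    (T lam κ Θ : ℝ) (hT : 0 < T) (hlam : 0 < lam) (hκ : 0 < κ) (hΘ : 0 < Θ)
    (p₀ K : ℝ)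
    (Xdot : Ω → ℝ → ℝ) (hXdotmeas : Measurable (Function.uncurry Xdot))
    (Cb : ℝ) (hXdotb : ∀ ω t, |Xdot ω t| ≤ Cb)
    (X : Ω → ℝ → ℝ) (hXac : ∀ ω t, X ω t = ∫ s in (0 : ℝ)..t, Xdot ω s)
    (hXadapted : Adapted 𝓕 fun t ω => X ω t)
    (θ : Ω → ℝ) (hθmeas : Measurable[𝓕 T] θ)
    (hθrange : ∀ ω, θ ω ∈ Set.Icc (0 : ℝ) Θ)
    (P : Ω → ℝ → ℝ) (hP : ∀ ω t, P ω t = p₀ + W t ω + lam * X ω t)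
    (J : Ω → ℝ)
    (hJ : ∀ ω, J ω = -(∫ t in (0 : ℝ)..T, Xdot ω t * (P ω t + κ * Xdot ω t))
      + (X ω T + θ ω) * (P ω T - (1 / 2) * lam * (X ω T + θ ω)) - θ ω * K) :
    (∫ ω, J ω ∂μ
        = -κ * (∫ ω, (∫ t in (0 : ℝ)..T, (Xdot ω t) ^ 2) ∂μ)
          + ∫ ω, θ ω * (p₀ + W T ω - (1 / 2) * lam * θ ω - K) ∂μ) ∧
    (∫ ω, J ω ∂μ
        ≤ ∫ ω, sSup ((fun ϑ => ϑ * (p₀ + W T ω - (1 / 2) * lam * ϑ - K)) ''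
            Set.Icc (0 : ℝ) Θ) ∂μ) ∧
    (∀ θ' J' : Ω → ℝ,
      Measurable[𝓕 T] θ' → (∀ ω, θ' ω ∈ Set.Icc (0 : ℝ) Θ) →
      (∀ ω, θ' ω * (p₀ + W T ω - (1 / 2) * lam * θ' ω - K)
        = sSup ((fun ϑ => ϑ * (p₀ + W T ω - (1 / 2) * lam * ϑ - K)) ''
            Set.Icc (0 : ℝ) Θ)) →
      (∀ ω, J' ω = θ' ω * ((p₀ + W T ω) - (1 / 2) * lam * θ' ω) - θ' ω * K) →
      ∫ ω, J' ω ∂μ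
        = ∫ ω, sSup ((fun ϑ => ϑ * (p₀ + W T ω - (1 / 2) * lam * ϑ - K)) ''
            Set.Icc (0 : ℝ) Θ) ∂μ) := by
  -- basic setup
  have hΩne : Nonempty Ω := by
    by_contra h
    rw [not_nonempty_iff] at h
    have h1 : μ Set.univ = 1 := measure_univ
    rw [Set.univ_eq_empty_iff.mpr h, measure_empty] at h1
    exact zero_ne_one h1
  obtain ⟨ω₀⟩ := hΩne
  have hCb0 : 0 ≤ Cb := le_trans (abs_nonneg _) (hXdotb ω₀ 0)
  haveI hνfin : IsFiniteMeasure (volume.restrict (Set.Ioc (0:ℝ) T)) := aux_finite 0 T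
  have hfm : ∀ ω, Measurable fun t => Xdot ω t := fun ω => hXdotmeas.of_uncurry_left
  have hXmeasF : ∀ t, Measurable[𝓕 t] fun ω => X ω t := fun t => hXadapted t
  have hXmeas : ∀ t, Measurable fun ω => X ω t := fun t => (hXmeasF t).mono (𝓕.le t) le_rfl
  have hXcont : ∀ ω, Continuous fun t => X ω t := by
    intro ω
    have h1 : (fun t => X ω t) = fun t => ∫ s in (0:ℝ)..t, Xdot ω s := funext fun t => hXac ω t
    rw [h1]
    exact intervalIntegral.continuous_primitive (fun a b => aux_II (hfm ω) (hXdotb ω) a b) 0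
  have hXb : ∀ ω t, |X ω t| ≤ Cb * |t| := by
    intro ω t
    rw [hXac]
    have h := intervalIntegral.norm_integral_le_of_norm_le_const
      (C := Cb) (f := fun s => Xdot ω s) (a := 0) (b := t) (fun s _ => by
        simpa [Real.norm_eq_abs] using hXdotb ω s)
    simpa [Real.norm_eq_abs] using h
  have hWm : ∀ t, Measurable (W t) := fun t => (hW.stronglyAdapted t).measurable.mono (𝓕.le t) le_rfl
  have hWTi : Integrable (W T) μ := hW.integrable T
  have hXu : Measurable (Function.uncurry fun t ω => X ω t) :=
    measurable_uncurry_of_continuous_of_measurable (fun ω => hXcont ω) (fun t => hXmeas t)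
  have hWu : Measurable (Function.uncurry W) :=
    measurable_uncurry_of_continuous_of_measurable hWpath hWm
  have hXp : Measurable fun p : Ω × ℝ => X p.1 p.2 := hXu.comp measurable_swap
  have hWp : Measurable fun p : Ω × ℝ => W p.2 p.1 := hWu.comp measurable_swap
  -- the adapted modification Z of Xdot
  set Z : Ω → ℝ → ℝ := fun ω t => max (-Cb) (min Cb
    (Filter.limsup (fun n : ℕ =>
      ((n : ℝ) + 1) * (X ω t - X ω (t - 1 / ((n : ℝ) + 1)))) Filter.atTop)) with hZdef
  have hZu : Measurable fun p : Ω × ℝ => Z p.1 p.2 := by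
    refine Measurable.max measurable_const (Measurable.min measurable_const ?_)
    refine Measurable.limsup fun n => ?_
    have h2 : Measurable fun p : Ω × ℝ => X p.1 (p.2 - 1 / ((n:ℝ) + 1)) :=
      hXp.comp (measurable_fst.prodMk (measurable_snd.sub measurable_const))
    exact (hXp.sub h2).const_mul _
  have hZb : ∀ ω t, |Z ω t| ≤ Cb := by
    intro ω t
    rw [abs_le]
    exact ⟨le_max_left _ _, max_le (by linarith) (min_le_left _ _)⟩
  have hZsm : ∀ t, StronglyMeasurable[𝓕 t] fun ω => Z ω t := by
    intro t
    apply Measurable.stronglyMeasurable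
    refine Measurable.max measurable_const (Measurable.min measurable_const ?_)
    refine Measurable.limsup fun n => ?_
    have h1 : Measurable[𝓕 t] fun ω => X ω t := hXmeasF t
    have h2 : Measurable[𝓕 t] fun ω => X ω (t - 1 / ((n:ℝ) + 1)) := by
      refine (hXmeasF _).mono (𝓕.mono ?_) le_rfl
      have : (0:ℝ) < 1 / ((n:ℝ)+1) := by positivity
      linarith
    exact (h1.sub h2).const_mul _
  have hZae : ∀ ω, ∀ᵐ t : ℝ, Z ω t = Xdot ω t := by
    intro ω
    have hloc : MeasureTheory.LocallyIntegrable (Xdot ω) volume := by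
      intro x
      refine ⟨Set.Icc (x - 1) (x + 1), Icc_mem_nhds (by linarith) (by linarith), ?_⟩
      haveI : IsFiniteMeasure (volume.restrict (Set.Icc (x-1) (x+1))) :=
        ⟨by rw [Measure.restrict_apply_univ]; exact measure_Icc_lt_top⟩
      exact aux_integrable_of_bounded (hfm ω).aestronglyMeasurable (hXdotb ω)
    have hv := VitaliFamily.ae_tendsto_average
      (v := IsUnifLocDoublingMeasure.vitaliFamily (volume : Measure ℝ) 1) hloc
    filter_upwards [hv] with t ht
    have h1 := Real.tendsto_Icc_vitaliFamily_left t
    have hseq : Tendsto (fun n : ℕ => t - 1 / ((n:ℝ) + 1)) atTop (𝓝[<] t) := by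
      apply tendsto_nhdsWithin_of_tendsto_nhds_of_eventually_within
      · have h2 : Tendsto (fun n : ℕ => 1 / ((n:ℝ) + 1)) atTop (𝓝 0) :=
          tendsto_one_div_add_atTop_nhds_zero_nat
        simpa using (tendsto_const_nhds (x := t)).sub h2
      · filter_upwards with n
        have : (0:ℝ) < 1 / ((n:ℝ)+1) := by positivity
        simp only [Set.mem_Iio]; linarith
    have h2 : Tendsto (fun n : ℕ => ⨍ y in Set.Icc (t - 1/((n:ℝ)+1)) t, Xdot ω y) atTop
        (𝓝 (Xdot ω t)) := ht.comp (h1.comp hseq)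
    have h3 : ∀ n : ℕ, ⨍ y in Set.Icc (t - 1/((n:ℝ)+1)) t, Xdot ω y
        = ((n:ℝ)+1) * (X ω t - X ω (t - 1/((n:ℝ)+1))) := by
      intro n
      have hpos : (0:ℝ) < 1 / ((n:ℝ)+1) := by positivity
      have hsub : t - 1/((n:ℝ)+1) ≤ t := by linarith
      have h4 : ∫ y in Set.Icc (t - 1/((n:ℝ)+1)) t, Xdot ω y
          = X ω t - X ω (t - 1/((n:ℝ)+1)) := by
        rw [integral_Icc_eq_integral_Ioc, ← intervalIntegral.integral_of_le hsub,
          hXac ω t, hXac ω (t - 1/((n:ℝ)+1)),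
          ← intervalIntegral.integral_interval_sub_left
            (aux_II (hfm ω) (hXdotb ω) 0 t) (aux_II (hfm ω) (hXdotb ω) 0 _)]
      rw [setAverage_eq, h4, Real.volume_real_Icc_of_le hsub, smul_eq_mul,
        show t - (t - 1/((n:ℝ)+1)) = 1/((n:ℝ)+1) by ring,
        one_div, inv_inv]
    have h5 : Tendsto (fun n : ℕ => ((n:ℝ)+1) * (X ω t - X ω (t - 1/((n:ℝ)+1)))) atTop
        (𝓝 (Xdot ω t)) := (Filter.tendsto_congr h3).mp h2
    show max (-Cb) (min Cb _) = Xdot ω t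
    rw [h5.limsup_eq, min_eq_right (abs_le.1 (hXdotb ω t)).2,
      max_eq_right (abs_le.1 (hXdotb ω t)).1]
  -- product integrability facts
  have hWprodInt : Integrable (fun p : Ω × ℝ => W p.2 p.1)
      (μ.prod (volume.restrict (Set.Ioc (0:ℝ) T))) := by
    refine ⟨hWp.aestronglyMeasurable, ?_⟩
    show (∫⁻ p, ‖W p.2 p.1‖ₑ ∂(μ.prod (volume.restrict (Set.Ioc (0:ℝ) T)))) < ⊤
    rw [lintegral_prod_symm' _ hWp.enorm]
    have e3 : ENNReal.ofReal (∫ ω, ‖W T ω‖ ∂μ) = ∫⁻ ω, ‖W T ω‖ₑ ∂μ :=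
      ofReal_integral_norm_eq_lintegral_enorm hWTi
    have hBdef : ∀ t, t ≤ T → (∫⁻ ω, ‖W t ω‖ₑ ∂μ) ≤ ∫⁻ ω, ‖W T ω‖ₑ ∂μ := by
      intro t htT
      have hcond : W t =ᵐ[μ] μ[W T | 𝓕 t] := (hW.condExp_ae_eq htT).symm
      have e1 : ∫⁻ ω, ‖W t ω‖ₑ ∂μ = ∫⁻ ω, ‖(μ[W T | 𝓕 t]) ω‖ₑ ∂μ :=
        lintegral_congr_ae (hcond.mono fun ω h => by simp only [h])
      have e2 : ENNReal.ofReal (∫ ω, ‖(μ[W T | 𝓕 t]) ω‖ ∂μ)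
          = ∫⁻ ω, ‖(μ[W T | 𝓕 t]) ω‖ₑ ∂μ :=
        ofReal_integral_norm_eq_lintegral_enorm integrable_condExp
      rw [e1, ← e2, ← e3]
      apply ENNReal.ofReal_le_ofReal
      simpa [Real.norm_eq_abs] using integral_abs_condExp_le (m := 𝓕 t) (μ := μ) (W T)
    calc ∫⁻ t in Set.Ioc (0:ℝ) T, (∫⁻ ω, ‖W t ω‖ₑ ∂μ) ∂volume
        ≤ ∫⁻ _t in Set.Ioc (0:ℝ) T, (∫⁻ ω, ‖W T ω‖ₑ ∂μ) ∂volume := by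
          refine lintegral_mono_ae ?_
          filter_upwards [ae_restrict_mem measurableSet_Ioc] with t ht
          exact hBdef t ht.2
      _ = (∫⁻ ω, ‖W T ω‖ₑ ∂μ) * (volume.restrict (Set.Ioc (0:ℝ) T)) Set.univ := by
          rw [lintegral_const]
      _ < ⊤ := by
          rw [Measure.restrict_apply_univ]
          exact ENNReal.mul_lt_top hWTi.2 measure_Ioc_lt_top
  have hconstProd : ∀ {g : Ω → ℝ}, Integrable g μ →
      Integrable (fun p : Ω × ℝ => g p.1) (μ.prod (volume.restrict (Set.Ioc (0:ℝ) T))) := by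
    intro g hg
    have h := hg.mul_prod (integrable_const (1:ℝ)) (ν := volume.restrict (Set.Ioc (0:ℝ) T))
    simpa using h
  have hZWint : Integrable (fun p : Ω × ℝ => Z p.1 p.2 * W p.2 p.1)
      (μ.prod (volume.restrict (Set.Ioc (0:ℝ) T))) := by
    refine Integrable.mono' (hWprodInt.abs.const_mul Cb)
      ((hZu.mul hWp).aestronglyMeasurable) (Eventually.of_forall fun p => ?_)
    rw [Real.norm_eq_abs, abs_mul]
    exact mul_le_mul_of_nonneg_right (hZb p.1 p.2) (abs_nonneg _)
  have hfWint : Integrable (fun p : Ω × ℝ => Xdot p.1 p.2 * W p.2 p.1)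
      (μ.prod (volume.restrict (Set.Ioc (0:ℝ) T))) := by
    refine Integrable.mono' (hWprodInt.abs.const_mul Cb)
      ((hXdotmeas.mul hWp).aestronglyMeasurable) (Eventually.of_forall fun p => ?_)
    rw [Real.norm_eq_abs, abs_mul]
    exact mul_le_mul_of_nonneg_right (hXdotb p.1 p.2) (abs_nonneg _)
  have hZWTint : Integrable (fun p : Ω × ℝ => Z p.1 p.2 * W T p.1)
      (μ.prod (volume.restrict (Set.Ioc (0:ℝ) T))) := by
    refine Integrable.mono' ((hconstProd hWTi).abs.const_mul Cb)
      ((hZu.mul ((hWm T).comp measurable_fst)).aestronglyMeasurable)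
      (Eventually.of_forall fun p => ?_)
    rw [Real.norm_eq_abs, abs_mul]
    exact mul_le_mul_of_nonneg_right (hZb p.1 p.2) (abs_nonneg _)
  have hsqProdInt : Integrable (fun p : Ω × ℝ => (Xdot p.1 p.2)^2)
      (μ.prod (volume.restrict (Set.Ioc (0:ℝ) T))) := by
    refine aux_integrable_of_bounded (hXdotmeas.pow_const 2).aestronglyMeasurable
      (C := Cb^2) fun p => ?_
    rw [abs_of_nonneg (sq_nonneg _), ← sq_abs]
    exact pow_le_pow_left₀ (abs_nonneg _) (hXdotb p.1 p.2) 2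
  have hQint : Integrable (fun ω => ∫ t in Set.Ioc (0:ℝ) T, (Xdot ω t)^2) μ :=
    hsqProdInt.integral_prod_left
  have hRint : Integrable (fun ω => ∫ t in Set.Ioc (0:ℝ) T, Xdot ω t * W t ω) μ :=
    hfWint.integral_prod_left
  have hθm : Measurable θ := hθmeas.mono (𝓕.le T) le_rfl
  have hθb : ∀ ω, |θ ω| ≤ Θ := fun ω =>
    abs_le.mpr ⟨by linarith [(hθrange ω).1], (hθrange ω).2⟩
  have hG2meas : AEStronglyMeasurable
      (fun ω => θ ω * (p₀ + W T ω - 1 / 2 * lam * θ ω - K)) μ :=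
    (hθm.mul (((measurable_const.add (hWm T)).sub
      (measurable_const.mul hθm)).sub measurable_const)).aestronglyMeasurable
  have hG2int : Integrable (fun ω => θ ω * (p₀ + W T ω - 1 / 2 * lam * θ ω - K)) μ := by
    refine Integrable.mono'
      ((hWTi.abs.const_mul Θ).add (integrable_const (Θ * (|p₀| + |K| + 1/2*lam*Θ))))
      hG2meas (Eventually.of_forall fun ω => ?_)
    rw [Real.norm_eq_abs]
    have h1 := hθb ω
    have h2 := (hθrange ω).1
    have h3 := (hθrange ω).2
    have h4 : |θ ω * (p₀ + W T ω - 1/2*lam*θ ω - K)|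
        ≤ Θ * |p₀ + W T ω - 1/2*lam*θ ω - K| := by
      rw [abs_mul]; exact mul_le_mul_of_nonneg_right h1 (abs_nonneg _)
    refine h4.trans ?_
    have h5 : |p₀ + W T ω - 1/2*lam*θ ω - K| ≤ |W T ω| + (|p₀| + |K| + 1/2*lam*Θ) := by
      apply abs_le.mpr
      constructor <;>
        nlinarith [le_abs_self (W T ω), neg_abs_le (W T ω), le_abs_self p₀, neg_abs_le p₀,
          le_abs_self K, neg_abs_le K,
          mul_le_mul_of_nonneg_left h3 (show (0:ℝ) ≤ 1/2*lam by positivity),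
          mul_nonneg (show (0:ℝ) ≤ 1/2*lam by positivity) h2]
    calc Θ * |p₀ + W T ω - 1/2*lam*θ ω - K|
        ≤ Θ * (|W T ω| + (|p₀| + |K| + 1/2*lam*Θ)) := mul_le_mul_of_nonneg_left h5 hΘ.le
      _ = Θ * |W T ω| + Θ * (|p₀| + |K| + 1/2*lam*Θ) := by ring
  have hXTWi : Integrable (fun ω => X ω T * W T ω) μ := by
    refine Integrable.mono' (hWTi.abs.const_mul (Cb * |T|))
      (((hXmeas T).mul (hWm T)).aestronglyMeasurable) (Eventually.of_forall fun ω => ?_)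
    rw [Real.norm_eq_abs, abs_mul]
    exact mul_le_mul_of_nonneg_right (hXb ω T) (abs_nonneg _)
  -- pathwise identity
  have hJeq : ∀ ω, J ω = -κ * (∫ t in Set.Ioc (0:ℝ) T, (Xdot ω t)^2)
      + θ ω * (p₀ + W T ω - 1 / 2 * lam * θ ω - K)
      + (X ω T * W T ω - ∫ t in Set.Ioc (0:ℝ) T, Xdot ω t * W t ω) := by
    intro ω
    have II1 : IntervalIntegrable (fun t => p₀ * Xdot ω t) volume 0 T :=
      (aux_II (hfm ω) (hXdotb ω) 0 T).const_mul p₀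
    have II2 : IntervalIntegrable (fun t => Xdot ω t * W t ω) volume 0 T := by
      have hgc : Continuous fun t => Cb * |W t ω| := continuous_const.mul (hWpath ω).abs
      refine (hgc.intervalIntegrable 0 T).mono_fun
        (((hfm ω).mul (hWpath ω).measurable).aestronglyMeasurable)
        (Eventually.of_forall fun t => ?_)
      simp only [Real.norm_eq_abs, abs_mul, abs_abs, abs_of_nonneg hCb0]
      exact mul_le_mul_of_nonneg_right (hXdotb ω t) (abs_nonneg _)
    have II3 : IntervalIntegrable (fun t => X ω t * Xdot ω t) volume 0 T := by
      have hgc : Continuous fun t => |X ω t| * Cb := (hXcont ω).abs.mul continuous_const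
      refine (hgc.intervalIntegrable 0 T).mono_fun
        (((hXcont ω).measurable.mul (hfm ω)).aestronglyMeasurable)
        (Eventually.of_forall fun t => ?_)
      simp only [Real.norm_eq_abs, abs_mul, abs_abs, abs_of_nonneg hCb0]
      exact mul_le_mul_of_nonneg_left (hXdotb ω t) (abs_nonneg _)
    have II4 : IntervalIntegrable (fun t => (Xdot ω t)^2) volume 0 T := by
      refine aux_II ((hfm ω).pow_const 2) (C := Cb^2) (fun t => ?_) 0 T
      rw [abs_of_nonneg (sq_nonneg _), ← sq_abs]
      exact pow_le_pow_left₀ (abs_nonneg _) (hXdotb ω t) 2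
    have hsplit : ∫ t in (0:ℝ)..T, Xdot ω t * (P ω t + κ * Xdot ω t)
        = p₀ * X ω T + (∫ t in Set.Ioc (0:ℝ) T, Xdot ω t * W t ω)
          + lam * ((X ω T)^2/2) + κ * (∫ t in Set.Ioc (0:ℝ) T, (Xdot ω t)^2) := by
      have hpt : ∀ t ∈ Set.uIcc (0:ℝ) T, Xdot ω t * (P ω t + κ * Xdot ω t)
          = p₀ * Xdot ω t + Xdot ω t * W t ω + lam * (X ω t * Xdot ω t)
            + κ * (Xdot ω t)^2 := by
        intro t _; rw [hP]; ring
      rw [intervalIntegral.integral_congr hpt,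
        intervalIntegral.integral_add ((II1.add II2).add (II3.const_mul lam))
          (II4.const_mul κ),
        intervalIntegral.integral_add (II1.add II2) (II3.const_mul lam),
        intervalIntegral.integral_add II1 II2,
        intervalIntegral.integral_const_mul, intervalIntegral.integral_const_mul,
        intervalIntegral.integral_const_mul]
      have e1 : ∫ t in (0:ℝ)..T, Xdot ω t = X ω T := (hXac ω T).symm
      have e2 : ∫ t in (0:ℝ)..T, Xdot ω t * W t ω
          = ∫ t in Set.Ioc (0:ℝ) T, Xdot ω t * W t ω :=
        intervalIntegral.integral_of_le hT.le
      have e4 : ∫ t in (0:ℝ)..T, (Xdot ω t)^2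
          = ∫ t in Set.Ioc (0:ℝ) T, (Xdot ω t)^2 :=
        intervalIntegral.integral_of_le hT.le
      have e3 : ∫ t in (0:ℝ)..T, X ω t * Xdot ω t = (X ω T)^2 / 2 := by
        rw [intervalIntegral.integral_of_le hT.le,
          setIntegral_congr_fun measurableSet_Ioc
            (fun t _ => by simp only [hXac ω t] :
              Set.EqOn (fun t => X ω t * Xdot ω t)
                (fun t => (∫ s in (0:ℝ)..t, Xdot ω s) * Xdot ω t) (Set.Ioc 0 T)),
          aux_selfconv (hfm ω) (hXdotb ω) hT.le, ← hXac]
      rw [e1, e2, e3, e4]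
    rw [hJ ω, hsplit, hP ω T]
    ring
  -- martingale step
  have hXT_eq : ∀ ω, X ω T * W T ω = ∫ t in Set.Ioc (0:ℝ) T, Z ω t * W T ω := by
    intro ω
    have hZX : ∫ t in Set.Ioc (0:ℝ) T, Z ω t = X ω T := by
      rw [integral_congr_ae (ae_restrict_of_ae (hZae ω)),
        ← intervalIntegral.integral_of_le hT.le, ← hXac]
    calc X ω T * W T ω = (∫ t in Set.Ioc (0:ℝ) T, Z ω t) * W T ω := by rw [hZX]
      _ = ∫ t in Set.Ioc (0:ℝ) T, Z ω t * W T ω := (integral_mul_const _ _).symm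
  have hkey : ∫ ω, X ω T * W T ω ∂μ
      = ∫ ω, (∫ t in Set.Ioc (0:ℝ) T, Xdot ω t * W t ω) ∂μ := by
    calc ∫ ω, X ω T * W T ω ∂μ
        = ∫ ω, (∫ t in Set.Ioc (0:ℝ) T, Z ω t * W T ω) ∂μ :=
          integral_congr_ae (Eventually.of_forall hXT_eq)
      _ = ∫ t in Set.Ioc (0:ℝ) T, (∫ ω, Z ω t * W T ω ∂μ) ∂volume :=
          integral_integral_swap (f := fun ω t => Z ω t * W T ω) hZWTint
      _ = ∫ t in Set.Ioc (0:ℝ) T, (∫ ω, Z ω t * W t ω ∂μ) ∂volume := by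
          refine setIntegral_congr_fun measurableSet_Ioc fun t ht => ?_
          exact aux_mart hW ht.2 (hZsm t) (fun ω => hZb ω t)
      _ = ∫ ω, (∫ t in Set.Ioc (0:ℝ) T, Z ω t * W t ω) ∂μ :=
          (integral_integral_swap (f := fun ω t => Z ω t * W t ω) hZWint).symm
      _ = ∫ ω, (∫ t in Set.Ioc (0:ℝ) T, Xdot ω t * W t ω) ∂μ := by
          refine integral_congr_ae (Eventually.of_forall fun ω => ?_)
          exact integral_congr_ae
            (ae_restrict_of_ae ((hZae ω).mono fun t h => by simp only [h]))
  -- assemble part 1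
  have hQG : Integrable (fun ω => -κ * (∫ t in Set.Ioc (0:ℝ) T, (Xdot ω t)^2)) μ :=
    hQint.const_mul (-κ)
  have hG3int : Integrable
      (fun ω => X ω T * W T ω - ∫ t in Set.Ioc (0:ℝ) T, Xdot ω t * W t ω) μ :=
    hXTWi.sub hRint
  have hintJ : ∫ ω, J ω ∂μ
      = -κ * (∫ ω, (∫ t in Set.Ioc (0:ℝ) T, (Xdot ω t)^2) ∂μ)
        + ∫ ω, θ ω * (p₀ + W T ω - 1 / 2 * lam * θ ω - K) ∂μ := by
    have s1 : ∫ ω, J ω ∂μ = ∫ ω, ((-κ * ∫ t in Set.Ioc (0:ℝ) T, (Xdot ω t)^2)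
        + θ ω * (p₀ + W T ω - 1 / 2 * lam * θ ω - K)
        + (X ω T * W T ω - ∫ t in Set.Ioc (0:ℝ) T, Xdot ω t * W t ω)) ∂μ :=
      integral_congr_ae (Eventually.of_forall hJeq)
    have s2 : ∫ ω, ((-κ * ∫ t in Set.Ioc (0:ℝ) T, (Xdot ω t)^2)
        + θ ω * (p₀ + W T ω - 1 / 2 * lam * θ ω - K)
        + (X ω T * W T ω - ∫ t in Set.Ioc (0:ℝ) T, Xdot ω t * W t ω)) ∂μ
        = (∫ ω, ((-κ * ∫ t in Set.Ioc (0:ℝ) T, (Xdot ω t)^2)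
            + θ ω * (p₀ + W T ω - 1 / 2 * lam * θ ω - K)) ∂μ)
          + ∫ ω, (X ω T * W T ω - ∫ t in Set.Ioc (0:ℝ) T, Xdot ω t * W t ω) ∂μ :=
      integral_add (hQG.add hG2int) hG3int
    have s3 : ∫ ω, ((-κ * ∫ t in Set.Ioc (0:ℝ) T, (Xdot ω t)^2)
        + θ ω * (p₀ + W T ω - 1 / 2 * lam * θ ω - K)) ∂μ
        = (∫ ω, (-κ * ∫ t in Set.Ioc (0:ℝ) T, (Xdot ω t)^2) ∂μ)
          + ∫ ω, θ ω * (p₀ + W T ω - 1 / 2 * lam * θ ω - K) ∂μ :=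
      integral_add hQG hG2int
    have s4 : ∫ ω, (-κ * ∫ t in Set.Ioc (0:ℝ) T, (Xdot ω t)^2) ∂μ
        = -κ * ∫ ω, (∫ t in Set.Ioc (0:ℝ) T, (Xdot ω t)^2) ∂μ :=
      integral_const_mul _ _
    have s5 : ∫ ω, (X ω T * W T ω - ∫ t in Set.Ioc (0:ℝ) T, Xdot ω t * W t ω) ∂μ
        = (∫ ω, X ω T * W T ω ∂μ)
          - ∫ ω, (∫ t in Set.Ioc (0:ℝ) T, Xdot ω t * W t ω) ∂μ :=
      integral_sub hXTWi hRint
    rw [s1, s2, s3, s4, s5, hkey, sub_self, add_zero]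
  have hIocEq : (fun ω => ∫ t in (0:ℝ)..T, (Xdot ω t)^2)
      = fun ω => ∫ t in Set.Ioc (0:ℝ) T, (Xdot ω t)^2 :=
    funext fun ω => intervalIntegral.integral_of_le hT.le
  have hconj1 : ∫ ω, J ω ∂μ
      = -κ * (∫ ω, (∫ t in (0:ℝ)..T, (Xdot ω t)^2) ∂μ)
        + ∫ ω, θ ω * (p₀ + W T ω - 1 / 2 * lam * θ ω - K) ∂μ := by
    rw [hIocEq]; exact hintJ
  -- part 2 prep
  have himg : ∀ ω, (fun ϑ => ϑ * (p₀ + W T ω - 1 / 2 * lam * ϑ - K)) '' Set.Icc (0:ℝ) Θ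
      = (fun ϑ => ϑ * ((p₀ + W T ω - K) - 1 / 2 * lam * ϑ)) '' Set.Icc (0:ℝ) Θ := by
    intro ω
    apply Set.image_congr
    intro ϑ _
    ring
  set mfun : ℝ → ℝ := fun y => (max 0 (min Θ (y / lam)))
    * (y - 1 / 2 * lam * (max 0 (min Θ (y / lam)))) with hmfun
  have hMeq : ∀ ω, sSup ((fun ϑ => ϑ * (p₀ + W T ω - 1 / 2 * lam * ϑ - K)) ''
      Set.Icc (0:ℝ) Θ) = mfun (p₀ + W T ω - K) := by
    intro ω
    rw [himg ω]
    exact (aux_isGreatest hlam hΘ (p₀ + W T ω - K)).csSup_eq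
  have hcint : Integrable (fun ω => p₀ + W T ω - K) μ :=
    ((integrable_const p₀).add hWTi).sub (integrable_const K)
  have hmfc : Continuous mfun := by
    have h1 : Continuous fun y : ℝ => max 0 (min Θ (y / lam)) :=
      continuous_const.max (continuous_const.min (continuous_id.div_const lam))
    exact h1.mul (continuous_id.sub (continuous_const.mul h1))
  have hMb : ∀ ω, |mfun (p₀ + W T ω - K)| ≤ Θ * |p₀ + W T ω - K| + Θ * (1/2*lam*Θ) := by
    intro ω
    set y := p₀ + W T ω - K with hy
    have hm0 : (0:ℝ) ≤ max 0 (min Θ (y / lam)) := le_max_left _ _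
    have hmΘ : max 0 (min Θ (y / lam)) ≤ Θ := max_le hΘ.le (min_le_left _ _)
    set mm := max 0 (min Θ (y / lam)) with hmm
    have h1 : |y - 1/2*lam*mm| ≤ |y| + 1/2*lam*Θ := by
      have h2 := abs_add_le y (-(1/2*lam*mm))
      have h3 : |(-(1/2*lam*mm))| = 1/2*lam*mm := by
        rw [abs_neg, abs_of_nonneg (by positivity)]
      have h4 : 1/2*lam*mm ≤ 1/2*lam*Θ :=
        mul_le_mul_of_nonneg_left hmΘ (by positivity)
      calc |y - 1/2*lam*mm| = |y + -(1/2*lam*mm)| := by ring_nf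
        _ ≤ |y| + |(-(1/2*lam*mm))| := h2
        _ ≤ |y| + 1/2*lam*Θ := by rw [h3]; linarith
    calc |mfun y| = mm * |y - 1/2*lam*mm| := by
          rw [hmfun]; simp only []; rw [abs_mul, abs_of_nonneg hm0]
      _ ≤ Θ * (|y| + 1/2*lam*Θ) := mul_le_mul hmΘ h1 (abs_nonneg _) hΘ.le
      _ = Θ * |y| + Θ * (1/2*lam*Θ) := by ring
  have hMint : Integrable (fun ω => mfun (p₀ + W T ω - K)) μ := by
    refine Integrable.mono'
      ((hcint.abs.const_mul Θ).add (integrable_const (Θ * (1/2*lam*Θ))))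
      (hmfc.measurable.comp_aemeasurable hcint.aemeasurable).aestronglyMeasurable
      (Eventually.of_forall fun ω => ?_)
    rw [Real.norm_eq_abs]
    exact hMb ω
  have hG2leM : ∀ ω, θ ω * (p₀ + W T ω - 1 / 2 * lam * θ ω - K)
      ≤ mfun (p₀ + W T ω - K) := by
    intro ω
    rw [← hMeq ω]
    refine le_csSup ⟨mfun (p₀ + W T ω - K), ?_⟩ (Set.mem_image_of_mem _ (hθrange ω))
    rw [himg ω]
    exact (aux_isGreatest hlam hΘ (p₀ + W T ω - K)).2
  have hconj2 : ∫ ω, J ω ∂μ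
      ≤ ∫ ω, sSup ((fun ϑ => ϑ * (p₀ + W T ω - 1 / 2 * lam * ϑ - K)) ''
          Set.Icc (0:ℝ) Θ) ∂μ := by
    have h1 : ∫ ω, θ ω * (p₀ + W T ω - 1 / 2 * lam * θ ω - K) ∂μ
        ≤ ∫ ω, mfun (p₀ + W T ω - K) ∂μ := integral_mono hG2int hMint hG2leM
    have h2 : (0:ℝ) ≤ ∫ ω, (∫ t in (0:ℝ)..T, (Xdot ω t)^2) ∂μ :=
      integral_nonneg fun ω =>
        intervalIntegral.integral_nonneg hT.le (fun u _ => sq_nonneg _)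
    have h3 : ∫ ω, sSup ((fun ϑ => ϑ * (p₀ + W T ω - 1 / 2 * lam * ϑ - K)) ''
        Set.Icc (0:ℝ) Θ) ∂μ = ∫ ω, mfun (p₀ + W T ω - K) ∂μ :=
      integral_congr_ae (Eventually.of_forall fun ω => hMeq ω)
    rw [hconj1, h3]
    nlinarith [mul_nonneg hκ.le h2]
  refine ⟨hconj1, hconj2, ?_⟩
  intro θ' J' _ _ hmax hJ'
  refine integral_congr_ae (Eventually.of_forall fun ω => ?_)
  show J' ω = sSup ((fun ϑ => ϑ * (p₀ + W T ω - (1 / 2) * lam * ϑ - K)) '' Set.Icc (0:ℝ) Θ)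
  rw [hJ' ω, ← hmax ω]
  ring
end
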